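/- arXiv:1205.0348 — 8 statements merged into one kernel-verified Lean document; each statement's English description precedes it below -/
import Mathlib

section
/- Let U ⊆ ℝⁿ be open, let g : U → {real symmetric positive definite n×n matrices} be smooth (a Riemannian metric on U), let f : U → ℝ be smooth, and let p ∈ U with Df(p) ≠ 0. Then there exist an open neighborhood V of 0 in ℝⁿ and a smooth map ψ : V → U such that: ψ(0) = p; ψ is a diffeomorphism onto an open neighborhood of p in U; the vectors ∂₁ψ(0), …, ∂ₙψ(0) are orthonormal with respect to the inner product defined by g(p), i.e. (∂ᵢψ(0))ᵀ g(p) (∂ⱼψ(0)) = δᵢⱼ for all i, j; and all second-order partial derivatives of f ∘ ψ vanish identically on V. -/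
open Set Matrix

lemma exists_index {n : ℕ} (ℓ : (Fin n → ℝ) →L[ℝ] ℝ) (h : ℓ ≠ 0) :
    ∃ i : Fin n, ℓ (Pi.single i 1) ≠ 0 := by
  by_contra hc
  push_neg at hc
  apply h
  ext v
  have hv : v = ∑ i, v i • (Pi.single i 1 : Fin n → ℝ) := by
    funext k
    simp [Pi.single_apply, Finset.sum_apply]
  rw [hv, map_sum]
  simp [hc]

lemma exists_coord_equiv {n : ℕ} (i₀ : Fin n) (ℓ : (Fin n → ℝ) →L[ℝ] ℝ)
    (h : ℓ (Pi.single i₀ 1) ≠ 0) :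
    ∃ T : (Fin n → ℝ) ≃L[ℝ] (Fin n → ℝ),
      ∀ v, (T v) = fun k => if k = i₀ then ℓ v else v k := by
  classical
  let L : (Fin n → ℝ) →ₗ[ℝ] (Fin n → ℝ) :=
  { toFun := fun v k => if k = i₀ then ℓ v else v k
    map_add' := by intro v w; funext k; by_cases hk : k = i₀ <;> simp [hk]
    map_smul' := by intro c v; funext k; by_cases hk : k = i₀ <;> simp [hk] }
  have hinj : Function.Injective L := by
    rw [← LinearMap.ker_eq_bot, LinearMap.ker_eq_bot']
    intro v hv
    have hv' : ∀ k, (if k = i₀ then ℓ v else v k) = 0 := fun k => congrFun hv k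
    have h0 : ∀ k, k ≠ i₀ → v k = 0 := by
      intro k hk; have := hv' k; rwa [if_neg hk] at this
    have hℓ0 : ℓ v = 0 := by have := hv' i₀; rwa [if_pos rfl] at this
    have hv0 : v = v i₀ • (Pi.single i₀ 1 : Fin n → ℝ) := by
      funext k
      by_cases hk : k = i₀
      · subst hk; simp
      · simp [h0 k hk, Pi.single_apply, hk]
    have : v i₀ * ℓ (Pi.single i₀ 1) = 0 := by
      rw [hv0] at hℓ0; simpa using hℓ0
    have hvi : v i₀ = 0 := by
      rcases mul_eq_zero.1 this with h' | h'
      · exact h'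
      · exact absurd h' h
    rw [hv0, hvi, zero_smul]
  have hsurj : Function.Surjective L := (LinearMap.injective_iff_surjective).1 hinj
  let E := LinearEquiv.ofBijective L ⟨hinj, hsurj⟩
  exact ⟨E.toContinuousLinearEquiv, fun v => rfl⟩

open scoped MatrixOrder in
lemma exists_gram_equiv {n : ℕ} (G : Matrix (Fin n) (Fin n) ℝ) (hpos : G.PosDef) :
    ∃ B : (Fin n → ℝ) ≃L[ℝ] (Fin n → ℝ), ∀ i j : Fin n,
      (∑ k, ∑ l, B (Pi.single i 1) k * G k l * B (Pi.single j 1) l)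
        = if i = j then 1 else 0 := by
  classical
  set S := CFC.sqrt G with hSdef
  have hSS : S * S = G := CFC.sqrt_mul_sqrt_self G hpos.posSemidef.nonneg
  have hdetS : IsUnit S.det := by
    have h1 : S.det * S.det = G.det := by rw [← Matrix.det_mul, hSS]
    have h2 := hpos.det_pos
    refine isUnit_iff_ne_zero.2 fun h0 => ?_
    rw [h0, mul_zero] at h1
    exact h2.ne h1
  set M := S⁻¹ with hM
  have hSh : S.IsHermitian := (CFC.sqrt_nonneg G).posSemidef.1
  have hSt : Sᵀ = S := by
    ext i j
    have := congrFun (congrFun hSh i) j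
    simpa [Matrix.conjTranspose_apply] using this
  have hMt : Mᵀ = M := by rw [hM, Matrix.transpose_nonsing_inv, hSt]
  have key : Mᵀ * G * M = 1 := by
    rw [hMt, hM, ← hSS]
    have h1 : S⁻¹ * (S * S) = S := by
      rw [← Matrix.mul_assoc, Matrix.nonsing_inv_mul S hdetS, Matrix.one_mul]
    rw [h1, Matrix.mul_nonsing_inv S hdetS]
  have hdetM : IsUnit M.det := Matrix.isUnit_nonsing_inv_det S hdetS
  have hMunit : IsUnit M := (Matrix.isUnit_iff_isUnit_det M).2 hdetM
  have hinj : Function.Injective M.mulVec := Matrix.mulVec_injective_iff_isUnit.2 hMunit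
  have hsurj : Function.Surjective M.mulVec := Matrix.mulVec_surjective_iff_isUnit.2 hMunit
  let E := LinearEquiv.ofBijective M.mulVecLin ⟨hinj, hsurj⟩
  refine ⟨E.toContinuousLinearEquiv, fun i j => ?_⟩
  have hcol : ∀ (i : Fin n) (k : Fin n),
      E.toContinuousLinearEquiv (Pi.single i 1) k = M k i := by
    intro i k
    show (M.mulVec (Pi.single i 1)) k = M k i
    simp [Matrix.mulVec_single]
  simp only [hcol]
  have : (Mᵀ * G * M) i j = ∑ k, ∑ l, M k i * G k l * M l j := by
    rw [Matrix.mul_apply]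
    simp only [Matrix.mul_apply, Matrix.transpose_apply, Finset.sum_mul]
    rw [Finset.sum_comm]
  rw [← this, key, Matrix.one_apply]

/-- Around a non-critical point `p` of a smooth function `f` on an open set
`U ⊆ ℝⁿ` equipped with a smooth Riemannian metric `g`, there is a smooth local
parametrization `ψ` with `ψ(0) = p`, a diffeomorphism onto an open neighborhood of `p`,
whose coordinate frame at `0` is `g(p)`-orthonormal, and in which all second-order partial
derivatives of `f ∘ ψ` vanish identically. -/
theorem statement2 (n : ℕ) (U : Set (Fin n → ℝ)) (hU : IsOpen U)
    (g : (Fin n → ℝ) → Matrix (Fin n) (Fin n) ℝ)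
    (hgsmooth : ∀ i j : Fin n, ContDiffOn ℝ (⊤ : ℕ∞) (fun x => g x i j) U)
    (hgsym : ∀ x ∈ U, (g x).IsSymm)
    (hgpos : ∀ x ∈ U, (g x).PosDef)
    (f : (Fin n → ℝ) → ℝ) (hf : ContDiffOn ℝ (⊤ : ℕ∞) f U)
    (p : Fin n → ℝ) (hp : p ∈ U) (hdf : fderiv ℝ f p ≠ 0) :
    ∃ V : Set (Fin n → ℝ), IsOpen V ∧ (0 : Fin n → ℝ) ∈ V ∧
      ∃ ψ : (Fin n → ℝ) → (Fin n → ℝ),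
        ψ 0 = p ∧
        ContDiffOn ℝ (⊤ : ℕ∞) ψ V ∧
        ψ '' V ⊆ U ∧ IsOpen (ψ '' V) ∧ Set.InjOn ψ V ∧
        (∃ ψinv : (Fin n → ℝ) → (Fin n → ℝ),
          ContDiffOn ℝ (⊤ : ℕ∞) ψinv (ψ '' V) ∧ ∀ x ∈ V, ψinv (ψ x) = x) ∧
        (∀ i j : Fin n,
          (∑ k : Fin n, ∑ l : Fin n,
            fderiv ℝ ψ 0 (Pi.single i 1) k * g p k l * fderiv ℝ ψ 0 (Pi.single j 1) l)
            = if i = j then 1 else 0) ∧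
        (∀ i j : Fin n, ∀ x ∈ V,
          fderiv ℝ (fun y => fderiv ℝ (f ∘ ψ) y (Pi.single i 1)) x (Pi.single j 1) = 0) := by
  classical
  obtain ⟨i₀, hi₀⟩ := exists_index (fderiv ℝ f p) hdf
  -- the set of good points
  set D : Set (Fin n → ℝ) := {x | x ∈ U ∧ fderiv ℝ f x (Pi.single i₀ 1) ≠ 0} with hDdef
  have hfderiv_cont : ContinuousOn (fun x => fderiv ℝ f x (Pi.single i₀ 1)) U :=
    ((ContinuousLinearMap.apply ℝ ℝ (Pi.single i₀ 1 : Fin n → ℝ)).continuous).comp_continuousOn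
      (hf.continuousOn_fderiv_of_isOpen hU (by exact_mod_cast le_top))
  have hDopen : IsOpen D := by
    have : D = U ∩ (fun x => fderiv ℝ f x (Pi.single i₀ 1)) ⁻¹' ({0}ᶜ) := by
      ext x; simp [hDdef]
    rw [this]
    exact hfderiv_cont.isOpen_inter_preimage hU isOpen_compl_singleton
  have hpD : p ∈ D := ⟨hp, hi₀⟩
  -- the coordinate-change map φ
  set φ : (Fin n → ℝ) → (Fin n → ℝ) := fun x k => if k = i₀ then f x else x k with hφdef
  have hφU : ContDiffOn ℝ (⊤ : ℕ∞) φ U := by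
    rw [contDiffOn_pi]
    intro k
    by_cases hk : k = i₀
    · subst hk; simp only [hφdef, if_pos rfl]; exact hf
    · simp only [hφdef, if_neg hk]
      exact (ContinuousLinearMap.proj k (R := ℝ) (φ := fun _ : Fin n => ℝ)).contDiff.contDiffOn
  have hφat : ∀ z ∈ U, ContDiffAt ℝ (⊤ : ℕ∞) φ z := fun z hz =>
    hφU.contDiffAt (hU.mem_nhds hz)
  -- derivative of φ at good points
  have hTz : ∀ z ∈ D, ∃ T : (Fin n → ℝ) ≃L[ℝ] (Fin n → ℝ),
      (∀ v, (T v) = fun k => if k = i₀ then fderiv ℝ f z v else v k) ∧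
      HasFDerivAt φ (T : (Fin n → ℝ) →L[ℝ] (Fin n → ℝ)) z := by
    intro z hz
    obtain ⟨T, hT⟩ := exists_coord_equiv i₀ (fderiv ℝ f z) hz.2
    refine ⟨T, hT, ?_⟩
    have hfz : HasFDerivAt f (fderiv ℝ f z) z :=
      ((hf.differentiableOn (by simp) z hz.1).differentiableAt (hU.mem_nhds hz.1)).hasFDerivAt
    apply hasFDerivAt_pi'.2
    intro k
    by_cases hk : k = i₀
    · have hcomp : (ContinuousLinearMap.proj k).comp
          (T : (Fin n → ℝ) →L[ℝ] (Fin n → ℝ)) = fderiv ℝ f z := by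
        ext v
        simp [hT v, hk]
      have heq : (fun x => φ x k) = f := by funext x; simp [hφdef, hk]
      rw [hcomp, heq]
      exact hfz
    · have hcomp : (ContinuousLinearMap.proj k).comp
          (T : (Fin n → ℝ) →L[ℝ] (Fin n → ℝ)) = ContinuousLinearMap.proj k := by
        ext v
        simp [hT v, hk]
      have heq : (fun x => φ x k) = fun x => x k := by funext x; simp [hφdef, hk]
      rw [hcomp, heq]
      exact (ContinuousLinearMap.proj k (R := ℝ) (φ := fun _ : Fin n => ℝ)).hasFDerivAt
  obtain ⟨Tp, hTp, hTpd⟩ := hTz p hpD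
  have hsp : HasStrictFDerivAt φ (Tp : (Fin n → ℝ) →L[ℝ] (Fin n → ℝ)) p :=
    (hφat p hp).hasStrictFDerivAt' hTpd (by simp)
  set e := hsp.toOpenPartialHomeomorph φ with hedef
  have he_coe : ⇑e = φ := rfl
  have hpsource : p ∈ e.source := hsp.mem_toOpenPartialHomeomorph_source
  have hptarget : φ p ∈ e.target := hsp.image_mem_toOpenPartialHomeomorph_target
  obtain ⟨B, hB⟩ := exists_gram_equiv (g p) (hgpos p hp)
  set A := B.trans Tp with hAdef
  set c := φ p with hcdef
  set W := e.target ∩ e.symm ⁻¹' (D ∩ e.source) with hWdef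
  have hWopen : IsOpen W := e.isOpen_inter_preimage_symm (hDopen.inter e.open_source)
  have hWsub : W ⊆ e.target := inter_subset_left
  set V := (fun x => c + A x) ⁻¹' W with hVdef
  set ψ : (Fin n → ℝ) → (Fin n → ℝ) := fun x => e.symm (c + A x) with hψdef
  have hcont_aff : Continuous fun x : Fin n → ℝ => c + A x :=
    continuous_const.add A.continuous
  have hVopen : IsOpen V := hWopen.preimage hcont_aff
  have hsymm_c : e.symm c = p := by
    rw [hcdef, ← he_coe]
    exact e.left_inv hpsource
  have h0V : (0 : Fin n → ℝ) ∈ V := by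
    have : c + A 0 = c := by simp
    simp only [hVdef, Set.mem_preimage, this]
    exact ⟨hptarget, by rw [Set.mem_preimage, hsymm_c]; exact ⟨hpD, hpsource⟩⟩
  have hψ0 : ψ 0 = p := by
    simp only [hψdef, map_zero, add_zero]
    exact hsymm_c
  -- basic facts about points of V
  have hmemW : ∀ x ∈ V, (c + A x) ∈ W := fun x hx => hx
  have hfacts : ∀ x ∈ V, e.symm (c + A x) ∈ D ∧ e.symm (c + A x) ∈ e.source ∧
      φ (e.symm (c + A x)) = c + A x := by
    intro x hx
    obtain ⟨hyt, hyd⟩ := hmemW x hx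
    rw [Set.mem_preimage] at hyd
    exact ⟨hyd.1, hyd.2, by rw [← he_coe]; exact e.right_inv hyt⟩
  have hψU : ψ '' V ⊆ U := by
    rintro _ ⟨x, hx, rfl⟩
    exact ((hfacts x hx).1).1
  -- image of V
  have himg : (fun x => c + A x) '' V = W := by
    apply Set.image_preimage_eq
    intro y
    exact ⟨A.symm (y - c), by simp⟩
  have hψV : ψ '' V = e.symm '' W := by
    have : ψ '' V = e.symm '' ((fun x => c + A x) '' V) := by
      rw [← Set.image_comp]; rfl
    rw [this, himg]
  have hψVopen : IsOpen (ψ '' V) := by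
    rw [hψV, e.symm_image_eq_source_inter_preimage hWsub]
    exact e.isOpen_inter_preimage hWopen
  -- inverse
  set ψinv : (Fin n → ℝ) → (Fin n → ℝ) := fun z => A.symm (φ z - c) with hψinvdef
  have hψinv : ∀ x ∈ V, ψinv (ψ x) = x := by
    intro x hx
    simp only [hψinvdef, hψdef]
    rw [(hfacts x hx).2.2, add_sub_cancel_left, ContinuousLinearEquiv.symm_apply_apply]
  have hinjV : Set.InjOn ψ V := by
    intro a ha b hb hab
    rw [← hψinv a ha, ← hψinv b hb, hab]
  have hψinvsmooth : ContDiffOn ℝ (⊤ : ℕ∞) ψinv (ψ '' V) := by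
    have h1 : ContDiffOn ℝ (⊤ : ℕ∞) (fun z => φ z - c) U := hφU.sub contDiffOn_const
    have h2 : ContDiffOn ℝ (⊤ : ℕ∞) ψinv U :=
      (A.symm : (Fin n → ℝ) →L[ℝ] (Fin n → ℝ)).contDiff.comp_contDiffOn h1
    exact h2.mono hψU
  -- smoothness of ψ on V
  have hψsmooth : ContDiffOn ℝ (⊤ : ℕ∞) ψ V := by
    intro x hx
    apply ContDiffAt.contDiffWithinAt
    obtain ⟨hzD, hzsrc, hzφ⟩ := hfacts x hx
    set z := e.symm (c + A x) with hz
    obtain ⟨Tz, hTzv, hTzd⟩ := hTz z hzD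
    have hφz : ContDiffAt ℝ (⊤ : ℕ∞) φ z := hφat z hzD.1
    have hsz : HasStrictFDerivAt φ (Tz : (Fin n → ℝ) →L[ℝ] (Fin n → ℝ)) z :=
      hφz.hasStrictFDerivAt' hTzd (by simp)
    have hg : ∀ᶠ w in nhds z, e.symm (φ w) = w := by
      filter_upwards [e.open_source.mem_nhds hzsrc] with w hw
      rw [← he_coe]; exact e.left_inv hw
    have hev : ⇑e.symm =ᶠ[nhds (φ z)] hsz.localInverse φ Tz z :=
      hsz.localInverse_unique hg
    have hci : ContDiffAt ℝ (⊤ : ℕ∞) (hsz.localInverse φ Tz z) (φ z) :=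
      hφz.to_localInverse hTzd (by simp)
    have hsymm_at : ContDiffAt ℝ (⊤ : ℕ∞) (⇑e.symm) (φ z) :=
      hci.congr_of_eventuallyEq hev
    rw [hzφ] at hsymm_at
    have haff : ContDiffAt ℝ (⊤ : ℕ∞) (fun x : Fin n → ℝ => c + A x) x :=
      (contDiff_const.add A.contDiff).contDiffAt
    exact hsymm_at.comp x haff
  -- derivative of ψ at 0
  have houter : HasFDerivAt (⇑e.symm)
      (Tp.symm : (Fin n → ℝ) →L[ℝ] (Fin n → ℝ)) c :=
    hsp.to_localInverse.hasFDerivAt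
  have hinner : HasFDerivAt (fun x : Fin n → ℝ => c + A x)
      (A : (Fin n → ℝ) →L[ℝ] (Fin n → ℝ)) 0 :=
    (A : (Fin n → ℝ) →L[ℝ] (Fin n → ℝ)).hasFDerivAt.const_add c
  have hψd : HasFDerivAt ψ
      ((Tp.symm : (Fin n → ℝ) →L[ℝ] (Fin n → ℝ)).comp
        (A : (Fin n → ℝ) →L[ℝ] (Fin n → ℝ))) 0 := by
    have h00 : c + A 0 = c := by simp
    exact (h00 ▸ houter).comp 0 hinner
  have hfd : fderiv ℝ ψ 0 = (Tp.symm : (Fin n → ℝ) →L[ℝ] (Fin n → ℝ)).comp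
      (A : (Fin n → ℝ) →L[ℝ] (Fin n → ℝ)) := hψd.fderiv
  have hcol : ∀ i : Fin n, fderiv ℝ ψ 0 (Pi.single i 1) = B (Pi.single i 1) := by
    intro i
    rw [hfd]
    simp [hAdef, ContinuousLinearEquiv.trans_apply]
  -- second derivative claim
  set L : (Fin n → ℝ) →L[ℝ] ℝ :=
    (ContinuousLinearMap.proj i₀).comp (A : (Fin n → ℝ) →L[ℝ] (Fin n → ℝ)) with hLdef
  have hkey : ∀ w ∈ V, (f ∘ ψ) w = c i₀ + (A w) i₀ := by
    intro w hw
    obtain ⟨hzD, hzsrc, hzφ⟩ := hfacts w hw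
    have : f (e.symm (c + A w)) = φ (e.symm (c + A w)) i₀ := by simp [hφdef]
    calc (f ∘ ψ) w = f (e.symm (c + A w)) := rfl
      _ = φ (e.symm (c + A w)) i₀ := this
      _ = (c + A w) i₀ := by rw [hzφ]
      _ = c i₀ + (A w) i₀ := rfl
  have hq : ∀ w, HasFDerivAt (fun w : Fin n → ℝ => c i₀ + (A w) i₀) L w := by
    intro w
    exact L.hasFDerivAt.const_add (c i₀)
  have hfe : ∀ w ∈ V, fderiv ℝ (f ∘ ψ) w = L := by
    intro w hw
    have hEq : (f ∘ ψ) =ᶠ[nhds w] fun w => c i₀ + (A w) i₀ :=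
      Filter.eventuallyEq_of_mem (hVopen.mem_nhds hw) hkey
    rw [hEq.fderiv_eq, (hq w).fderiv]
  refine ⟨V, hVopen, h0V, ψ, hψ0, hψsmooth, hψU, hψVopen, hinjV,
    ⟨ψinv, hψinvsmooth, hψinv⟩, ?_, ?_⟩
  · intro i j
    simp only [hcol]
    exact hB i j
  · intro i j x hx
    have hEq : (fun y => fderiv ℝ (f ∘ ψ) y (Pi.single i 1)) =ᶠ[nhds x]
        fun _ => L (Pi.single i 1) :=
      Filter.eventuallyEq_of_mem (hVopen.mem_nhds hx) fun w hw => by rw [hfe w hw]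
    rw [hEq.fderiv_eq, fderiv_fun_const]
    rfl
end

section
/- Let H be an infinite-dimensional separable complex Hilbert space, D a self-adjoint densely defined operator on H, (λ_k)_{k∈ℕ} a nondecreasing sequence in [0,∞), and (e_i)_{i∈ℤ} a Hilbert basis of H with e_i ∈ dom D for all i, D e_k = √λ_k e_k for k ≥ 0, and D e_{−k} = −√λ_k e_{−k} for k ≥ 1. Let θ > 0. Then the following are equivalent: (i) liminf_{k→∞} λ_k k^{−θ} > 0; (ii) there exist C₀, C₁ > 0 such that for every integer n ≥ 1 there is a closed linear subspace Z_n ⊆ H satisfying: (a) the quotient H/Z_n is finite-dimensional of dimension at most C₀ n^{1/θ}; (b) D(dom D ∩ Z_n) ⊆ Z_n; (c) every u ∈ dom D ∩ Z_n with ‖u‖² + ‖Du‖² ≤ 1 satisfies ‖u‖ ≤ C₁ n^{−1/2}. -/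
open scoped InnerProductSpace
open Filter Topology
open scoped ENNReal

lemma parseval' {ι H : Type*} [NormedAddCommGroup H] [InnerProductSpace ℂ H]
    [CompleteSpace H] (e : HilbertBasis ι ℂ H) (v : H) :
    HasSum (fun i => ‖(⟪e i, v⟫_ℂ)‖ ^ 2) (‖v‖ ^ 2) := by
  have h := lp.hasSum_norm (p := 2) (by norm_num) (e.repr v)
  have h2 : (2 : ℝ≥0∞).toReal = ((2 : ℕ) : ℝ) := by norm_num
  rw [h2] at h
  simp only [Real.rpow_natCast, e.repr_apply_apply, e.repr.norm_map] at h
  exact_mod_cast h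

set_option maxHeartbeats 1000000 in
/-- Let `D` be a self-adjoint densely defined operator on an
infinite-dimensional separable complex Hilbert space, with a Hilbert basis `(eᵢ)_{i∈ℤ}` of
eigenvectors, `D e_k = √λ_k e_k` for `k ≥ 0` and `D e_{-k} = -√λ_k e_{-k}` for `k ≥ 1`,
where `(λ_k)` is nondecreasing in `[0,∞)`. For `θ > 0`, the condition
`liminf λ_k k^{-θ} > 0` is equivalent to the existence of `C₀, C₁ > 0` and, for each
`n ≥ 1`, of a closed subspace `Z_n` of codimension `≤ C₀ n^{1/θ}`, invariant under `D`,
such that every `u ∈ dom D ∩ Z_n` with `‖u‖² + ‖Du‖² ≤ 1` satisfies `‖u‖ ≤ C₁ n^{-1/2}`. -/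
theorem statement4 {H : Type*} [NormedAddCommGroup H] [InnerProductSpace ℂ H]
    [CompleteSpace H] [TopologicalSpace.SeparableSpace H]
    (hinf : ¬ FiniteDimensional ℂ H)
    (D : H →ₗ.[ℂ] H) (hdense : Dense (D.domain : Set H))
    (hsa : D.adjoint = D)
    (lam : ℕ → ℝ) (hlam0 : ∀ k, 0 ≤ lam k) (hlammono : Monotone lam)
    (e : HilbertBasis ℤ ℂ H)
    (he : ∀ i : ℤ, e i ∈ D.domain)
    (hpos : ∀ k : ℕ, D ⟨e (k : ℤ), he (k : ℤ)⟩ = (Real.sqrt (lam k) : ℂ) • e (k : ℤ))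
    (hneg : ∀ k : ℕ, 1 ≤ k →
      D ⟨e (-(k : ℤ)), he (-(k : ℤ))⟩ = (-(Real.sqrt (lam k)) : ℂ) • e (-(k : ℤ)))
    (θ : ℝ) (hθ : 0 < θ) :
    (∃ c : ℝ, 0 < c ∧ ∀ᶠ k : ℕ in atTop, c ≤ lam k * (k : ℝ) ^ (-θ)) ↔
      ∃ C₀ C₁ : ℝ, 0 < C₀ ∧ 0 < C₁ ∧
        ∀ n : ℕ, 1 ≤ n → ∃ Z : Submodule ℂ H,
          IsClosed (Z : Set H) ∧
          FiniteDimensional ℂ (H ⧸ Z) ∧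
          (Module.finrank ℂ (H ⧸ Z) : ℝ) ≤ C₀ * (n : ℝ) ^ (1 / θ) ∧
          (∀ u : H, ∀ hu : u ∈ D.domain, u ∈ Z → D ⟨u, hu⟩ ∈ Z) ∧
          (∀ u : H, ∀ hu : u ∈ D.domain, u ∈ Z →
            ‖u‖ ^ 2 + ‖D ⟨u, hu⟩‖ ^ 2 ≤ 1 → ‖u‖ ≤ C₁ / Real.sqrt n) := by
  classical
  obtain ⟨mu, hmu⟩ : ∃ mu : ℤ → ℝ, mu = fun i =>
      if 0 ≤ i then Real.sqrt (lam i.toNat) else -Real.sqrt (lam (-i).toNat) := ⟨_, rfl⟩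
  have hDe : ∀ i : ℤ, D ⟨e i, he i⟩ = ((mu i : ℝ) : ℂ) • e i := by
    intro i
    rcases le_or_gt 0 i with hi | hi
    · lift i to ℕ using hi with k hk
      have hmui : mu (k : ℤ) = Real.sqrt (lam k) := by
        rw [hmu]; simp
      rw [hmui]; exact hpos k
    · obtain ⟨k, hk1, rfl⟩ : ∃ k : ℕ, 1 ≤ k ∧ i = -(k : ℤ) :=
        ⟨(-i).toNat, by omega, by omega⟩
      have h1 : ¬ (0:ℤ) ≤ -(k:ℤ) := by omega
      have hmui : mu (-(k:ℤ)) = -Real.sqrt (lam k) := by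
        rw [hmu]; simp [h1, show k ≠ 0 by omega]
      rw [hmui, Complex.ofReal_neg]; exact hneg k hk1
  have hmusq : ∀ i : ℤ, (mu i) ^ 2 = lam i.natAbs := by
    intro i
    rcases le_or_gt 0 i with hi | hi
    · have h2 : i.toNat = i.natAbs := by omega
      rw [hmu]; simp [if_pos hi, h2, Real.sq_sqrt (hlam0 _)]
    · have h2 : (-i).toNat = i.natAbs := by omega
      rw [hmu]; simp [not_le.mpr hi, h2, neg_pow, Real.sq_sqrt (hlam0 _)]
  have hfa : D.IsFormalAdjoint D := by
    have h := LinearPMap.adjoint_isFormalAdjoint hdense (T := D)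
    rwa [hsa] at h
  have hcoef : ∀ (u : H) (hu : u ∈ D.domain) (i : ℤ),
      ⟪e i, (D ⟨u, hu⟩ : H)⟫_ℂ = ((mu i : ℝ) : ℂ) * ⟪e i, u⟫_ℂ := by
    intro u hu i
    have h := hfa ⟨e i, he i⟩ ⟨u, hu⟩
    rw [hDe i] at h
    rw [← h, inner_smul_left]
    simp [Complex.conj_ofReal]
  have hDsum : ∀ (u : H) (hu : u ∈ D.domain),
      HasSum (fun i : ℤ => lam i.natAbs * ‖⟪e i, u⟫_ℂ‖ ^ 2)
        (‖(D ⟨u, hu⟩ : H)‖ ^ 2) := by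
    intro u hu
    have h := parseval' e (D ⟨u, hu⟩ : H)
    have heq : (fun i : ℤ => ‖⟪e i, (D ⟨u, hu⟩ : H)⟫_ℂ‖ ^ 2)
        = fun i : ℤ => lam i.natAbs * ‖⟪e i, u⟫_ℂ‖ ^ 2 := by
      funext i
      rw [hcoef u hu i, norm_mul, mul_pow, Complex.norm_real, Real.norm_eq_abs,
        sq_abs, hmusq i]
    rwa [heq] at h
  constructor
  · -- forward direction
    rintro ⟨c, hc, hev⟩
    obtain ⟨N, hN⟩ := eventually_atTop.mp hev
    have hlow : ∀ k : ℕ, N ≤ k → 1 ≤ k → c * (k : ℝ) ^ θ ≤ lam k := by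
      intro k h1 h2
      have h := hN k h1
      have hk0 : (0 : ℝ) < (k : ℝ) := by exact_mod_cast h2
      rw [Real.rpow_neg hk0.le, ← div_eq_mul_inv,
        le_div_iff₀ (Real.rpow_pos_of_pos hk0 θ)] at h
      exact h
    have hcpow : (0 : ℝ) < c ^ (1 / θ) := Real.rpow_pos_of_pos hc _
    refine ⟨2 * N + 4 + 2 / c ^ (1 / θ), 1, by positivity, one_pos, ?_⟩
    intro n hn
    set m : ℕ := N + 1 + ⌈((n : ℝ) / c) ^ (1 / θ)⌉₊ with hmdef
    have hnc0 : (0 : ℝ) ≤ (n : ℝ) / c := by positivity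
    have hx0 : (0:ℝ) ≤ ((n : ℝ) / c) ^ (1 / θ) := Real.rpow_nonneg hnc0 _
    have hm1 : 1 ≤ m := by omega
    have hmN : N ≤ m := by omega
    have hmge : ((n : ℝ) / c) ^ (1 / θ) ≤ (m : ℝ) := by
      have h1 := Nat.le_ceil (((n : ℝ) / c) ^ (1 / θ))
      have h2 : ((⌈((n : ℝ) / c) ^ (1 / θ)⌉₊ : ℕ) : ℝ) ≤ (m : ℝ) := by
        exact_mod_cast Nat.le_add_left _ _
      linarith
    have hmle : (m : ℝ) ≤ (N : ℝ) + 2 + ((n : ℝ) / c) ^ (1 / θ) := by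
      have h1 := Nat.ceil_lt_add_one hx0
      have h3 : (m:ℝ) = (N:ℝ) + 1 + (⌈((n : ℝ) / c) ^ (1 / θ)⌉₊ : ℝ) := by
        rw [hmdef]; push_cast; ring
      linarith
    have hlamm : (n : ℝ) ≤ lam m := by
      have h1 : (n : ℝ) / c ≤ (m : ℝ) ^ θ := by
        have h2 := Real.rpow_le_rpow hx0 hmge hθ.le
        rwa [← Real.rpow_mul hnc0, one_div_mul_cancel hθ.ne', Real.rpow_one] at h2
      have h3 := hlow m hmN hm1
      have h4 : (n:ℝ) ≤ (m:ℝ)^θ * c := (div_le_iff₀ hc).mp h1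
      nlinarith
    set s : Finset H := (Finset.Ioo (-(m:ℤ)) (m:ℤ)).image e with hsdef
    set K : Submodule ℂ H := Submodule.span ℂ (s : Set H) with hKdef
    haveI hKfin : FiniteDimensional ℂ K :=
      FiniteDimensional.span_of_finite ℂ (Finset.finite_toSet s)
    have hcompl : IsCompl K Kᗮ := Submodule.isCompl_orthogonal_of_hasOrthogonalProjection
    have equiv : (H ⧸ (Kᗮ : Submodule ℂ H)) ≃ₗ[ℂ] K :=
      Submodule.quotientEquivOfIsCompl Kᗮ K hcompl.symm
    haveI hqfin : FiniteDimensional ℂ (H ⧸ (Kᗮ : Submodule ℂ H)) :=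
      Module.Finite.equiv equiv.symm
    have hrank : Module.finrank ℂ (H ⧸ (Kᗮ : Submodule ℂ H)) = Module.finrank ℂ K :=
      equiv.finrank_eq
    have hKrank : Module.finrank ℂ K ≤ 2 * m := by
      have h1 : Module.finrank ℂ K ≤ s.card := by
        simpa [Set.finrank] using finrank_span_finset_le_card s
      have h2 : s.card ≤ (Finset.Ioo (-(m:ℤ)) (m:ℤ)).card := Finset.card_image_le
      have h3 : (Finset.Ioo (-(m:ℤ)) (m:ℤ)).card = ((m:ℤ) - (-(m:ℤ)) - 1).toNat :=
        Int.card_Ioo _ _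
      omega
    have hZ1 : ∀ u : H, u ∈ Kᗮ → ∀ i ∈ Finset.Ioo (-(m:ℤ)) (m:ℤ), ⟪e i, u⟫_ℂ = 0 := by
      intro u hu i hi
      exact Submodule.inner_right_of_mem_orthogonal
        (Submodule.subset_span (Finset.mem_coe.mpr (Finset.mem_image_of_mem e hi))) hu
    have hZ2 : ∀ u : H, (∀ i ∈ Finset.Ioo (-(m:ℤ)) (m:ℤ), ⟪e i, u⟫_ℂ = 0) → u ∈ Kᗮ := by
      intro u h
      rw [Submodule.mem_orthogonal']
      intro v hv
      have hker : K ≤ LinearMap.ker ((innerSL ℂ u : H →L[ℂ] ℂ) : H →ₗ[ℂ] ℂ) := by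
        rw [hKdef, Submodule.span_le]
        intro x hx
        obtain ⟨i, hi, rfl⟩ := Finset.mem_image.mp (Finset.mem_coe.mp hx)
        simp only [SetLike.mem_coe, LinearMap.mem_ker, ContinuousLinearMap.coe_coe,
          innerSL_apply_apply]
        rw [← inner_conj_symm, h i hi, map_zero]
      have h5 := hker hv
      simpa using h5
    refine ⟨Kᗮ, Submodule.isClosed_orthogonal K, hqfin, ?_, ?_, ?_⟩
    · -- rank bound
      have hq : (Module.finrank ℂ (H ⧸ (Kᗮ : Submodule ℂ H)) : ℝ) ≤ 2 * (m:ℝ) := by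
        rw [hrank]; exact_mod_cast hKrank
      have hn1R : (1:ℝ) ≤ (n:ℝ)^(1/θ) := by
        have := Real.rpow_le_rpow (by norm_num : (0:ℝ) ≤ 1)
          (by exact_mod_cast hn : (1:ℝ) ≤ (n:ℝ)) (by positivity : (0:ℝ) ≤ 1/θ)
        rwa [Real.one_rpow] at this
      have hdiv : ((n:ℝ)/c)^(1/θ) = (n:ℝ)^(1/θ) / c^(1/θ) :=
        Real.div_rpow (by positivity) hc.le _
      rw [hdiv] at hmle
      have hfin : 2*(m:ℝ) ≤ (2*N + 4 + 2/c^(1/θ)) * (n:ℝ)^(1/θ) := by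
        rw [div_eq_mul_inv, div_eq_mul_inv] at *
        nlinarith [hcpow, hn1R, hmle, mul_pos hcpow hcpow,
          inv_pos.mpr hcpow]
      linarith
    · -- invariance
      intro u hu huZ
      apply hZ2
      intro i hi
      rw [hcoef u hu i, hZ1 u huZ i hi, mul_zero]
    · -- bound
      intro u hu huZ hnorm
      have h2 := hDsum u hu
      have h1 := (parseval' e u).mul_left (n:ℝ)
      have hle : (n:ℝ) * ‖u‖^2 ≤ ‖(D ⟨u,hu⟩ : H)‖^2 := by
        refine hasSum_le (fun i => ?_) h1 h2
        by_cases hi : i ∈ Finset.Ioo (-(m:ℤ)) (m:ℤ)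
        · rw [hZ1 u huZ i hi]; simp
        · have him : m ≤ i.natAbs := by
            simp only [Finset.mem_Ioo, not_and_or, not_lt] at hi
            omega
          have h6 : lam m ≤ lam i.natAbs := hlammono him
          have hnn : (0:ℝ) ≤ ‖⟪e i, u⟫_ℂ‖^2 := by positivity
          nlinarith [hlamm]
      have hn0 : (0:ℝ) < (n:ℝ) := by exact_mod_cast hn
      have husq : ‖u‖^2 ≤ 1 / (n:ℝ) := by
        rw [le_div_iff₀ hn0]
        nlinarith [sq_nonneg ‖(D ⟨u,hu⟩ : H)‖]
      have h7 : ‖u‖ ≤ Real.sqrt (1 / n) := by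
        rw [show ‖u‖ = Real.sqrt (‖u‖^2) from (Real.sqrt_sq (norm_nonneg u)).symm]
        exact Real.sqrt_le_sqrt husq
      rwa [one_div, Real.sqrt_inv, ← one_div] at h7
  · -- backward direction
    rintro ⟨C₀, C₁, hC₀, hC₁, hZs⟩
    set A : ℝ := (2 * C₀)⁻¹ ^ θ with hA
    have hA0 : 0 < A := Real.rpow_pos_of_pos (by positivity) _
    refine ⟨A / (4 * C₁ ^ 2), by positivity, ?_⟩
    have t0 : Tendsto (fun k : ℕ => ((k : ℝ) + 1) / (2 * C₀)) atTop atTop := by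
      apply Tendsto.atTop_div_const (by positivity)
      exact tendsto_atTop_add_const_right _ 1 tendsto_natCast_atTop_atTop
    have t1 : Tendsto (fun k : ℕ => (((k : ℝ) + 1) / (2 * C₀)) ^ θ) atTop atTop :=
      (tendsto_rpow_atTop hθ).comp t0
    have t2 : Tendsto (fun k : ℕ => A * (k : ℝ) ^ θ) atTop atTop := by
      apply Tendsto.const_mul_atTop hA0
      exact (tendsto_rpow_atTop hθ).comp tendsto_natCast_atTop_atTop
    filter_upwards [t1.eventually_ge_atTop 2, t2.eventually_ge_atTop (4 * C₁ ^ 2),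
      t2.eventually_ge_atTop 2, eventually_ge_atTop 1] with k hx2 hAk hA2 hk1
    set x : ℝ := (((k : ℝ) + 1) / (2 * C₀)) ^ θ with hxdef
    have hx0 : (0:ℝ) ≤ x := Real.rpow_nonneg (by positivity) _
    set n : ℕ := ⌊x⌋₊ with hndef
    have hn1 : 1 ≤ n := Nat.le_floor (by exact_mod_cast (by linarith : (1:ℝ) ≤ x))
    obtain ⟨Z, hZcl, hZfin, hZrk, hZinv, hZbd⟩ := hZs n hn1
    have hnx : (n : ℝ) ≤ x := Nat.floor_le hx0
    have hxn : x ≤ (n : ℝ) + 1 := (Nat.lt_floor_add_one x).le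
    have hdim : Module.finrank ℂ (H ⧸ Z) < k + 1 := by
      have h1 : (n:ℝ) ^ (1/θ) ≤ ((k:ℝ)+1)/(2*C₀) := by
        have h2 := Real.rpow_le_rpow (by positivity) hnx
          (by positivity : (0:ℝ) ≤ 1/θ)
        rwa [hxdef, ← Real.rpow_mul (by positivity), mul_one_div,
          div_self hθ.ne', Real.rpow_one] at h2
      have h3 : C₀ * (((k:ℝ)+1)/(2*C₀)) = ((k:ℝ)+1)/2 := by
        field_simp
      have h4 : C₀ * (n:ℝ)^(1/θ) ≤ ((k:ℝ)+1)/2 := by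
        calc C₀ * (n:ℝ)^(1/θ) ≤ C₀ * (((k:ℝ)+1)/(2*C₀)) :=
              mul_le_mul_of_nonneg_left h1 hC₀.le
          _ = ((k:ℝ)+1)/2 := h3
      have h5 : (Module.finrank ℂ (H ⧸ Z) : ℝ) < (k:ℝ) + 1 := by linarith
      exact_mod_cast h5
    set f : Fin (k+1) → H := fun j => e ((j : ℕ) : ℤ) with hfdef
    have hfinj : Function.Injective fun j : Fin (k+1) => ((j : ℕ) : ℤ) := by
      intro a b hab
      have h20 : ((a:ℕ):ℤ) = ((b:ℕ):ℤ) := hab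
      exact Fin.ext (by exact_mod_cast h20)
    have hli : LinearIndependent ℂ f := e.orthonormal.linearIndependent.comp _ hfinj
    set V : Submodule ℂ H := Submodule.span ℂ (Set.range f) with hVdef
    haveI hVfd : FiniteDimensional ℂ V :=
      FiniteDimensional.span_of_finite ℂ (Set.finite_range f)
    have hVrank : Module.finrank ℂ V = k + 1 := by
      rw [finrank_span_eq_card hli, Fintype.card_fin]
    have hex : ∃ u : H, u ∈ V ∧ u ∈ Z ∧ u ≠ 0 := by
      by_contra hcon
      push_neg at hcon
      have hinj : Function.Injective (Z.mkQ.comp V.subtype) := by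
        rw [← LinearMap.ker_eq_bot, Submodule.eq_bot_iff]
        intro y hy
        rw [LinearMap.mem_ker, LinearMap.comp_apply, Submodule.subtype_apply,
          Submodule.mkQ_apply, Submodule.Quotient.mk_eq_zero] at hy
        have h8 := hcon y.1 y.2 hy
        exact Subtype.ext h8
      have hle := LinearMap.finrank_le_finrank_of_injective hinj
      rw [hVrank] at hle
      omega
    obtain ⟨u, huV, huZ, hu0⟩ := hex
    have hVdom : V ≤ D.domain := by
      rw [hVdef, Submodule.span_le]
      rintro _ ⟨j, rfl⟩
      exact he _
    have hudom : u ∈ D.domain := hVdom huV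
    have hcoef0 : ∀ i : ℤ, (i < 0 ∨ (k:ℤ) < i) → ⟪e i, u⟫_ℂ = 0 := by
      intro i hi
      have hker : V ≤ LinearMap.ker ((innerSL ℂ (e i) : H →L[ℂ] ℂ) : H →ₗ[ℂ] ℂ) := by
        rw [hVdef, Submodule.span_le]
        rintro _ ⟨j, rfl⟩
        have hne : i ≠ ((j : ℕ) : ℤ) := by
          have := j.isLt
          omega
        simp only [SetLike.mem_coe, LinearMap.mem_ker, ContinuousLinearMap.coe_coe,
          innerSL_apply_apply, hfdef]
        exact e.orthonormal.2 hne
      simpa using hker huV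
    have h2 := hDsum u hudom
    have h1 := (parseval' e u).mul_left (lam k)
    have hDub : ‖(D ⟨u, hudom⟩ : H)‖^2 ≤ lam k * ‖u‖^2 := by
      refine hasSum_le (fun i => ?_) h2 h1
      by_cases hi : i < 0 ∨ (k:ℤ) < i
      · rw [hcoef0 i hi]; simp
      · push_neg at hi
        have h9 : i.natAbs ≤ k := by omega
        have hm := hlammono h9
        have hnn : (0:ℝ) ≤ ‖⟪e i, u⟫_ℂ‖^2 := by positivity
        nlinarith
    have ha : 0 < ‖u‖ := norm_pos_iff.mpr hu0
    have hlk0 : (0:ℝ) < 1 + lam k := by have := hlam0 k; linarith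
    set b : ℝ := Real.sqrt (1 + lam k) with hbdef
    have hb : 0 < b := Real.sqrt_pos.mpr hlk0
    have hbsq : b ^ 2 = 1 + lam k := Real.sq_sqrt hlk0.le
    set r : ℝ := (‖u‖ * b)⁻¹ with hrdef
    have hr : 0 < r := by positivity
    have hvdom : (r:ℂ) • u ∈ D.domain := D.domain.smul_mem _ hudom
    have hvZ : (r:ℂ) • u ∈ Z := Z.smul_mem _ huZ
    have hDv : (D ⟨(r:ℂ) • u, hvdom⟩ : H) = (r:ℂ) • (D ⟨u, hudom⟩ : H) := by
      have h10 : (⟨(r:ℂ) • u, hvdom⟩ : D.domain) = (r:ℂ) • (⟨u, hudom⟩ : D.domain) := rfl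
      rw [h10, D.map_smul]
    have hnv : ‖(r:ℂ) • u‖ = 1 / b := by
      rw [norm_smul, Complex.norm_real, Real.norm_eq_abs, abs_of_pos hr, hrdef]
      field_simp
    have hnDv : ‖(r:ℂ) • (D ⟨u, hudom⟩ : H)‖ = r * ‖(D ⟨u, hudom⟩ : H)‖ := by
      rw [norm_smul, Complex.norm_real, Real.norm_eq_abs, abs_of_pos hr]
    have hrsq : r^2 * ‖u‖^2 = 1/b^2 := by
      rw [hrdef]
      field_simp
    have hcond : ‖(r:ℂ) • u‖^2 + ‖(D ⟨(r:ℂ) • u, hvdom⟩ : H)‖^2 ≤ 1 := by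
      rw [hDv, hnv, hnDv]
      have h11 : r^2 * ‖(D ⟨u,hudom⟩:H)‖^2 ≤ lam k / b^2 := by
        calc r^2 * ‖(D ⟨u,hudom⟩:H)‖^2 ≤ r^2 * (lam k * ‖u‖^2) :=
              mul_le_mul_of_nonneg_left hDub (sq_nonneg r)
          _ = lam k * (r^2 * ‖u‖^2) := by ring
          _ = lam k * (1/b^2) := by rw [hrsq]
          _ = lam k / b^2 := by ring
      have h12 : 1/b^2 + lam k/b^2 = 1 := by
        rw [← add_div, ← hbsq]
        exact div_self (pow_ne_zero _ hb.ne')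
      have h13 : (1/b)^2 = 1/b^2 := by ring
      have h14 : (r * ‖(D ⟨u,hudom⟩:H)‖)^2 = r^2 * ‖(D ⟨u,hudom⟩:H)‖^2 := by ring
      rw [h13, h14]
      linarith
    have hvbd := hZbd ((r:ℂ) • u) hvdom hvZ hcond
    rw [hnv] at hvbd
    have hsn : (0:ℝ) < Real.sqrt n := Real.sqrt_pos.mpr (by exact_mod_cast hn1)
    rw [div_le_div_iff₀ hb hsn] at hvbd
    have hnle : (n:ℝ) ≤ C₁^2 * (1 + lam k) := by
      have h6 : Real.sqrt n ≤ C₁ * b := by linarith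
      have h7 := mul_self_le_mul_self (Real.sqrt_nonneg _) h6
      rw [Real.mul_self_sqrt (by positivity)] at h7
      calc (n:ℝ) ≤ (C₁*b)*(C₁*b) := h7
        _ = C₁^2 * b^2 := by ring
        _ = C₁^2 * (1+lam k) := by rw [hbsq]
    have hAx : A * (k:ℝ)^θ ≤ x := by
      have h15 : ((k:ℝ) * (2*C₀)⁻¹) ^ θ = (k:ℝ)^θ * A := by
        rw [hA, Real.mul_rpow (by positivity) (by positivity)]
      have h16 : ((k:ℝ) * (2*C₀)⁻¹) ^ θ ≤ x := by
        rw [hxdef, div_eq_mul_inv]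
        exact Real.rpow_le_rpow (by positivity)
          (by nlinarith [inv_pos.mpr (show (0:ℝ) < 2*C₀ by positivity)]) hθ.le
      nlinarith [h15, h16]
    have hp : (0:ℝ) < (k:ℝ)^θ :=
      Real.rpow_pos_of_pos (by exact_mod_cast hk1) _
    rw [Real.rpow_neg (by positivity), ← div_eq_mul_inv, le_div_iff₀ hp,
      div_mul_eq_mul_div, div_le_iff₀ (by positivity : (0:ℝ) < 4*C₁^2)]
    nlinarith [hAk, hAx, hnx, hxn, hnle, hA2]
end

section
/- Let H be a real or complex Hilbert space, let Π : H → H be an orthogonal projection of finite rank p, and let 0 < C < 1. Then every orthonormal family contained in the set { u ∈ H : ‖Πu‖ > C‖u‖ } is finite and has at most p/C² elements. -/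
open scoped InnerProductSpace

/-- If `Π` is an orthogonal projection of finite rank `p` on a (real or
complex) Hilbert space `H` and `0 < C < 1`, then every orthonormal family contained in
`{ u : ‖Πu‖ > C‖u‖ }` is finite, with at most `p/C²` elements. -/
theorem statement6 {𝕜 H : Type*} [RCLike 𝕜] [NormedAddCommGroup H]
    [InnerProductSpace 𝕜 H] [CompleteSpace H]
    (P : H →ₗ[𝕜] H) (hidem : P ∘ₗ P = P)
    (hsymm : ∀ u v : H, ⟪P u, v⟫_𝕜 = ⟪u, P v⟫_𝕜)
    (p : ℕ) (hfin : FiniteDimensional 𝕜 (LinearMap.range P))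
    (hrank : Module.finrank 𝕜 (LinearMap.range P) = p)
    (C : ℝ) (hC0 : 0 < C) (hC1 : C < 1)
    {ι : Type*} (v : ι → H) (hv : Orthonormal 𝕜 v)
    (hmem : ∀ i, C * ‖v i‖ < ‖P (v i)‖) :
    Finite ι ∧ (Nat.card ι : ℝ) ≤ (p : ℝ) / C ^ 2 := by
  classical
  set K := LinearMap.range P with hK
  have hfix : ∀ x : H, x ∈ K → P x = x := by
    rintro _ ⟨y, rfl⟩
    simpa using LinearMap.congr_fun hidem y
  let b : OrthonormalBasis (Fin p) 𝕜 K := (stdOrthonormalBasis 𝕜 K).reindex (finCongr hrank)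
  -- norm formula
  have hnorm : ∀ u : H, ‖P u‖ ^ 2 = ∑ j : Fin p, ‖⟪(b j : H), P u⟫_𝕜‖ ^ 2 := by
    intro u
    set w : K := ⟨P u, LinearMap.mem_range_self P u⟩ with hw
    have h1 : ‖P u‖ = ‖w‖ := rfl
    have h2 : ∀ j, ⟪(b j : H), P u⟫_𝕜 = b.repr w j := fun j => by
      rw [b.repr_apply_apply]; rfl
    have h3 : ‖w‖ = ‖b.repr w‖ := (b.repr.norm_map w).symm
    rw [h1, h3, EuclideanSpace.norm_eq, Real.sq_sqrt (by positivity)]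
    exact Finset.sum_congr rfl fun j _ => by rw [h2 j]
  -- symmetry rewrite
  have hswap : ∀ (u : H) (j : Fin p), ‖⟪(b j : H), P u⟫_𝕜‖ = ‖⟪u, (b j : H)⟫_𝕜‖ := by
    intro u j
    rw [norm_inner_symm, hsymm, hfix _ (b j).2]
  -- key bound for any finset
  have key : ∀ s : Finset ι, (s.card : ℝ) * C ^ 2 ≤ (p : ℝ) := by
    intro s
    have h1 : (s.card : ℝ) * C ^ 2 ≤ ∑ i ∈ s, ‖P (v i)‖ ^ 2 := by
      have hcs : (s.card : ℝ) = ∑ _i ∈ s, (1:ℝ) := by simp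
      rw [hcs, Finset.sum_mul]
      refine Finset.sum_le_sum fun i _ => ?_
      have hvi : ‖v i‖ = 1 := hv.1 i
      have := hmem i
      rw [hvi, mul_one] at this
      calc (1:ℝ) * C ^ 2 = C ^ 2 := one_mul _
        _ ≤ ‖P (v i)‖ ^ 2 := by
          apply pow_le_pow_left₀ hC0.le this.le
    have h2 : ∑ i ∈ s, ‖P (v i)‖ ^ 2 ≤ (p : ℝ) := by
      calc ∑ i ∈ s, ‖P (v i)‖ ^ 2
          = ∑ i ∈ s, ∑ j : Fin p, ‖⟪v i, (b j : H)⟫_𝕜‖ ^ 2 := by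
            refine Finset.sum_congr rfl fun i _ => ?_
            rw [hnorm (v i)]
            exact Finset.sum_congr rfl fun j _ => by rw [hswap]
        _ = ∑ j : Fin p, ∑ i ∈ s, ‖⟪v i, (b j : H)⟫_𝕜‖ ^ 2 := Finset.sum_comm
        _ ≤ ∑ j : Fin p, ‖(b j : H)‖ ^ 2 :=
            Finset.sum_le_sum fun j _ => hv.sum_inner_products_le _
        _ = (p : ℝ) := by
            have hb1 : ∀ j : Fin p, ‖(b j : H)‖ = 1 := fun j => b.orthonormal.1 j
            simp [hb1]
    linarith
  have hC2 : (0:ℝ) < C ^ 2 := pow_pos hC0 2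
  have hcard : ∀ s : Finset ι, (s.card : ℝ) ≤ (p : ℝ) / C ^ 2 := fun s =>
    (le_div_iff₀ hC2).2 (key s)
  have hFin : Finite ι := by
    by_contra h
    have : Infinite ι := not_finite_iff_infinite.mp h
    obtain ⟨s, hs⟩ := Infinite.exists_subset_card_eq ι (⌈(p:ℝ) / C ^ 2⌉₊ + 1)
    have h2 := hcard s
    rw [hs] at h2
    have h3 : ((p:ℝ) / C ^ 2) ≤ (⌈(p:ℝ) / C ^ 2⌉₊ : ℝ) := Nat.le_ceil _
    push_cast at h2
    linarith
  refine ⟨hFin, ?_⟩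
  have := Fintype.ofFinite ι
  rw [Nat.card_eq_fintype_card, ← Finset.card_univ]
  exact hcard Finset.univ
end

section
/- Let H be a separable Hilbert space with a Hilbert basis (e_i)_{i∈ℤ}, let G be a Hilbert space, and let R : H → G be a bounded linear map such that ker R is finite-dimensional of dimension p and such that there is C > 0 with ‖Ru‖ ≥ C‖u‖ for every u ∈ H orthogonal to ker R. Then the set { i ∈ ℤ : ‖R e_i‖ < C/√2 } has at most 2p elements. -/
open scoped InnerProductSpace

/-- Let `H` be a separable Hilbert space with Hilbert basis `(e_i)_{i∈ℤ}`,
`G` a Hilbert space, and `R : H → G` bounded with finite-dimensional kernel of dimension `p`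
and `‖Ru‖ ≥ C‖u‖` for `u ⊥ ker R`. Then `{ i : ‖R eᵢ‖ < C/√2 }` has at most `2p` elements. -/
theorem statement7 {𝕜 H G : Type*} [RCLike 𝕜]
    [NormedAddCommGroup H] [InnerProductSpace 𝕜 H] [CompleteSpace H]
    [NormedAddCommGroup G] [InnerProductSpace 𝕜 G] [CompleteSpace G]
    (e : HilbertBasis ℤ 𝕜 H)
    (R : H →L[𝕜] G) (p : ℕ)
    (hker : FiniteDimensional 𝕜 (LinearMap.ker (R : H →ₗ[𝕜] G)))
    (hdim : Module.finrank 𝕜 (LinearMap.ker (R : H →ₗ[𝕜] G)) = p)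
    (C : ℝ) (hC : 0 < C)
    (hlow : ∀ u : H, (∀ v ∈ LinearMap.ker (R : H →ₗ[𝕜] G), ⟪u, v⟫_𝕜 = 0) → C * ‖u‖ ≤ ‖R u‖) :
    {i : ℤ | ‖R (e i)‖ < C / Real.sqrt 2}.Finite ∧
      {i : ℤ | ‖R (e i)‖ < C / Real.sqrt 2}.ncard ≤ 2 * p := by
  classical
  set K : Submodule 𝕜 H := LinearMap.ker (R : H →ₗ[𝕜] G) with hK
  set S : Set ℤ := {i : ℤ | ‖R (e i)‖ < C / Real.sqrt 2} with hS
  -- Step A: for i ∈ S, the projection of `e i` onto the kernel has squared norm ≥ 1/2.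
  have stepA : ∀ i ∈ S, (1 : ℝ) / 2 ≤ ‖(Submodule.orthogonalProjectionOnto K (e i) : H)‖ ^ 2 := by
    intro i hi
    set u : H := (Submodule.orthogonalProjectionOnto Kᗮ (e i) : H) with hu
    have huval : u = e i - (Submodule.orthogonalProjectionOnto K (e i) : H) :=
      Submodule.starProjection_orthogonal_val (K := K) (e i)
    have hu_orth : ∀ v ∈ K, ⟪u, v⟫_𝕜 = 0 :=
      (Submodule.mem_orthogonal' K u).1 (Submodule.orthogonalProjectionOnto Kᗮ (e i)).2
    have hRu : R u = R (e i) := by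
      rw [huval, map_sub]
      have : R ((Submodule.orthogonalProjectionOnto K (e i) : H)) = 0 :=
        (Submodule.orthogonalProjectionOnto K (e i)).2
      rw [this, sub_zero]
    have hCu : C * ‖u‖ ≤ ‖R (e i)‖ := by
      rw [← hRu]; exact hlow u hu_orth
    have hlt : ‖u‖ < 1 / Real.sqrt 2 :=
      lt_of_mul_lt_mul_left
        (by rw [mul_one_div]; exact lt_of_le_of_lt hCu hi) hC.le
    have hn : (0 : ℝ) ≤ ‖u‖ := norm_nonneg u
    have hss : (1 / Real.sqrt 2) * (1 / Real.sqrt 2) = 1 / 2 := by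
      rw [div_mul_div_comm, one_mul, Real.mul_self_sqrt (by norm_num : (0:ℝ) ≤ 2)]
    have hsq : ‖u‖ ^ 2 < 1 / 2 := by
      nlinarith [mul_self_lt_mul_self hn hlt]
    have hnorm1 : ‖e i‖ = 1 := e.orthonormal.1 i
    have hpyth : ‖e i‖ ^ 2 =
        ‖(Submodule.orthogonalProjectionOnto K (e i) : H)‖ ^ 2 + ‖u‖ ^ 2 :=
      Submodule.norm_sq_eq_add_norm_sq_projection (e i) K
    rw [hnorm1] at hpyth
    nlinarith
  -- Step B: for any finite set `T` of indices, the sum of squared projection norms is ≤ p.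
  have stepB : ∀ T : Finset ℤ,
      ∑ i ∈ T, ‖(Submodule.orthogonalProjectionOnto K (e i) : H)‖ ^ 2 ≤ (p : ℝ) := by
    intro T
    have := hker
    set f : OrthonormalBasis (Fin (Module.finrank 𝕜 K)) 𝕜 K := stdOrthonormalBasis 𝕜 K
    have hterm : ∀ i : ℤ, ‖(Submodule.orthogonalProjectionOnto K (e i) : H)‖ ^ 2 =
        ∑ j, ‖⟪(f j : H), e i⟫_𝕜‖ ^ 2 := by
      intro i
      have h1 : ‖(Submodule.orthogonalProjectionOnto K (e i) : H)‖ = ‖Submodule.orthogonalProjectionOnto K (e i)‖ := rfl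
      have h2 : ‖Submodule.orthogonalProjectionOnto K (e i)‖ = ‖f.repr (Submodule.orthogonalProjectionOnto K (e i))‖ :=
        (f.repr.norm_map _).symm
      have h3 : ‖f.repr (Submodule.orthogonalProjectionOnto K (e i))‖ ^ 2 =
          ∑ j, ‖f.repr (Submodule.orthogonalProjectionOnto K (e i)) j‖ ^ 2 := by
        rw [EuclideanSpace.norm_eq, Real.sq_sqrt]
        positivity
      rw [h1, h2, h3]
      refine Finset.sum_congr rfl fun j _ => ?_
      rw [f.repr_apply_apply, Submodule.inner_orthogonalProjectionOnto_eq_of_mem_left]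
    calc ∑ i ∈ T, ‖(Submodule.orthogonalProjectionOnto K (e i) : H)‖ ^ 2
        = ∑ i ∈ T, ∑ j, ‖⟪(f j : H), e i⟫_𝕜‖ ^ 2 :=
          Finset.sum_congr rfl fun i _ => hterm i
      _ = ∑ j, ∑ i ∈ T, ‖⟪(f j : H), e i⟫_𝕜‖ ^ 2 := Finset.sum_comm
      _ ≤ ∑ j : Fin (Module.finrank 𝕜 K), (1 : ℝ) := by
          refine Finset.sum_le_sum fun j _ => ?_
          have hb : ∑ i ∈ T, ‖⟪e i, (f j : H)⟫_𝕜‖ ^ 2 ≤ ‖(f j : H)‖ ^ 2 :=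
            e.orthonormal.sum_inner_products_le (f j : H)
          have hfj : ‖(f j : H)‖ = 1 := f.orthonormal.1 j
          calc ∑ i ∈ T, ‖⟪(f j : H), e i⟫_𝕜‖ ^ 2
              = ∑ i ∈ T, ‖⟪e i, (f j : H)⟫_𝕜‖ ^ 2 :=
                Finset.sum_congr rfl fun i _ => by rw [norm_inner_symm]
            _ ≤ ‖(f j : H)‖ ^ 2 := hb
            _ = 1 := by rw [hfj]; norm_num
      _ = (p : ℝ) := by simp [hdim]
  -- Any finite subset of S has cardinality ≤ 2p.
  have key : ∀ T : Finset ℤ, ↑T ⊆ S → T.card ≤ 2 * p := by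
    intro T hT
    have h1 : (T.card : ℝ) * (1 / 2) ≤
        ∑ i ∈ T, ‖(Submodule.orthogonalProjectionOnto K (e i) : H)‖ ^ 2 := by
      rw [Finset.card_eq_sum_ones T, Nat.cast_sum]
      rw [Finset.sum_mul]
      refine Finset.sum_le_sum fun i hi => ?_
      simpa using stepA i (hT hi)
    have h2 := stepB T
    have : (T.card : ℝ) ≤ 2 * p := by linarith
    exact_mod_cast this
  have hfin : S.Finite := by
    by_contra hinf
    obtain ⟨T, hTs, hTc⟩ := Set.Infinite.exists_subset_card_eq hinf (2 * p + 1)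
    have := key T hTs
    omega
  refine ⟨hfin, ?_⟩
  rw [Set.ncard_eq_toFinset_card S hfin]
  exact key _ (by simp)
end

section
/- Let (Eₐ)_{a∈ℕ} and (Fₐ)_{a∈ℕ} be families of Hilbert spaces, and for each a let Tₐ be a densely defined operator from Eₐ to Fₐ. Let E and F be the ℓ²-direct sums of (Eₐ) and (Fₐ), and define the operator T from E to F with domain { u ∈ E : uₐ ∈ dom Tₐ for all a and Σₐ ‖Tₐuₐ‖² < ∞ } by (Tu)ₐ = Tₐuₐ. Then T is densely defined and its adjoint is the ℓ²-sum of the adjoints: dom T* = { v ∈ F : vₐ ∈ dom Tₐ* for all a and Σₐ ‖Tₐ*vₐ‖² < ∞ } and (T*v)ₐ = Tₐ*vₐ for every v ∈ dom T*. -/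
open scoped InnerProductSpace

/-- Let `(Tₐ)` be densely defined operators between Hilbert spaces `Eₐ`,
`Fₐ`, and let `T` be the operator between the `ℓ²`-direct sums with domain
`{ u : uₐ ∈ dom Tₐ ∀a, Σₐ‖Tₐuₐ‖² < ∞ }`, `(Tu)ₐ = Tₐuₐ`. Then `T` is densely defined and
its adjoint is the `ℓ²`-sum of the adjoints: `dom T* = { v : vₐ ∈ dom Tₐ* ∀a,
Σₐ‖Tₐ*vₐ‖² < ∞ }` and `(T*v)ₐ = Tₐ*vₐ`. -/
theorem statement10 {𝕜 : Type*} [RCLike 𝕜] {E F : ℕ → Type*}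
    [∀ a, NormedAddCommGroup (E a)] [∀ a, InnerProductSpace 𝕜 (E a)]
    [∀ a, CompleteSpace (E a)]
    [∀ a, NormedAddCommGroup (F a)] [∀ a, InnerProductSpace 𝕜 (F a)]
    [∀ a, CompleteSpace (F a)]
    (Ta : ∀ a : ℕ, E a →ₗ.[𝕜] F a)
    (hdense : ∀ a, Dense ((Ta a).domain : Set (E a)))
    (T : lp E 2 →ₗ.[𝕜] lp F 2)
    (hdom : ∀ u : lp E 2, u ∈ T.domain ↔
      ∃ h : ∀ a, u a ∈ (Ta a).domain, Memℓp (fun a => Ta a ⟨u a, h a⟩) 2)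
    (hval : ∀ (u : lp E 2) (hu : u ∈ T.domain) (h : ∀ a, u a ∈ (Ta a).domain) (a : ℕ),
      (T ⟨u, hu⟩) a = Ta a ⟨u a, h a⟩) :
    Dense (T.domain : Set (lp E 2)) ∧
    (∀ v : lp F 2, v ∈ T.adjoint.domain ↔
      ∃ h : ∀ a, v a ∈ (Ta a).adjoint.domain,
        Memℓp (fun a => (Ta a).adjoint ⟨v a, h a⟩) 2) ∧
    (∀ (v : lp F 2) (hv : v ∈ T.adjoint.domain)
      (h : ∀ a, v a ∈ (Ta a).adjoint.domain) (a : ℕ),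
      (T.adjoint ⟨v, hv⟩) a = (Ta a).adjoint ⟨v a, h a⟩) := by
  classical
  -- componentwise membership for single elements
  have hmem : ∀ (a : ℕ) (x : (Ta a).domain) (b : ℕ),
      (lp.single 2 a (x : E a) : ∀ b, E b) b ∈ (Ta b).domain := by
    intro a x b
    rcases eq_or_ne b a with rfl | hb
    · rw [lp.single_apply_self]; exact x.2
    · rw [lp.single_apply_ne _ _ _ hb]; exact Submodule.zero_mem _
  -- single elements lie in the domain of `T`
  have hsingle_mem : ∀ (a : ℕ) (x : (Ta a).domain),
      lp.single 2 a (x : E a) ∈ T.domain := by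
    intro a x
    rw [hdom]
    refine ⟨hmem a x, ?_⟩
    refine (memℓp_zero ?_).of_exponent_ge (by norm_num)
    refine (Set.finite_singleton a).subset ?_
    intro b hb
    simp only [Set.mem_setOf_eq] at hb
    by_contra hba
    apply hb
    have h0 : (⟨(lp.single 2 a (x : E a) : ∀ b, E b) b, hmem a x b⟩ : (Ta b).domain) = 0 := by
      ext
      exact lp.single_apply_ne 2 a _ hba
    rw [h0, (Ta b).map_zero]
  -- value of `T` on single elements
  have hT_single : ∀ (a : ℕ) (x : (Ta a).domain),
      T ⟨lp.single 2 a (x : E a), hsingle_mem a x⟩ = lp.single 2 a (Ta a x) := by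
    intro a x
    apply lp.ext
    funext b
    rw [hval _ _ (hmem a x) b]
    rcases eq_or_ne b a with rfl | hb
    · have h1 : (⟨(lp.single 2 b (x : E b) : ∀ c, E c) b, hmem b x b⟩ : (Ta b).domain) = x :=
        Subtype.ext (lp.single_apply_self 2 b _)
      rw [h1, lp.single_apply_self]
    · have h1 : (⟨(lp.single 2 a (x : E a) : ∀ b, E b) b, hmem a x b⟩ : (Ta b).domain) = 0 :=
        Subtype.ext (lp.single_apply_ne 2 a _ hb)
      rw [h1, (Ta b).map_zero, lp.single_apply_ne _ _ _ hb]
  -- `single` is an isometry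
  have hsingle_sub : ∀ (a : ℕ) (x y : E a),
      lp.single (E := E) 2 a (x - y) = lp.single 2 a x - lp.single 2 a y := by
    intro a x y
    apply lp.ext
    funext b
    rw [lp.coeFn_sub]
    rcases eq_or_ne b a with rfl | hb
    · simp [lp.single_apply_self]
    · simp [lp.single_apply_ne _ _ _ hb]
  have hnorm : ∀ (a : ℕ) (x : E a), ‖lp.single (E := E) 2 a x‖ = ‖x‖ := by
    intro a x
    exact lp.norm_single (E := E) (p := 2) (by norm_num) a x
  have hiso : ∀ a : ℕ, Isometry (fun x : E a => lp.single (E := E) 2 a x) := by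
    intro a
    apply Isometry.of_dist_eq
    intro x y
    rw [dist_eq_norm, dist_eq_norm, ← hsingle_sub, hnorm]
  -- density of the domain of `T`
  have hdense_T : Dense (T.domain : Set (lp E 2)) := by
    intro f
    have hf : HasSum (fun a => lp.single 2 a (f a)) f := lp.hasSum_single (by norm_num) f
    have hcl : ∀ a : ℕ, lp.single (E := E) 2 a (f a) ∈ closure (T.domain : Set (lp E 2)) := by
      intro a
      have h1 : f a ∈ closure ((Ta a).domain : Set (E a)) := (hdense a) _
      have h3 : lp.single (E := E) 2 a (f a) ∈
          closure ((fun x : E a => lp.single (E := E) 2 a x) '' ((Ta a).domain : Set (E a))) :=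
        image_closure_subset_closure_image (hiso a).continuous ⟨f a, h1, rfl⟩
      refine closure_mono ?_ h3
      rintro _ ⟨x, hx, rfl⟩
      exact hsingle_mem a ⟨x, hx⟩
    have hsums : ∀ s : Finset ℕ,
        (∑ a ∈ s, lp.single 2 a (f a)) ∈ closure (T.domain : Set (lp E 2)) := by
      intro s
      have h4 : (∑ a ∈ s, lp.single 2 a (f a)) ∈ T.domain.topologicalClosure :=
        Submodule.sum_mem _ fun a _ => hcl a
      rw [← Submodule.topologicalClosure_coe]; exact h4
    exact isClosed_closure.mem_of_tendsto hf (Filter.Eventually.of_forall hsums)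
  -- forward direction and adjoint values
  have key : ∀ (v : lp F 2) (hv : v ∈ T.adjoint.domain) (a : ℕ),
      v a ∈ (Ta a).adjoint.domain ∧
      ∀ hva : v a ∈ (Ta a).adjoint.domain,
        (Ta a).adjoint ⟨v a, hva⟩ = (T.adjoint ⟨v, hv⟩) a := by
    intro v hv a
    have hid : ∀ x : (Ta a).domain,
        ⟪(T.adjoint ⟨v, hv⟩) a, (x : E a)⟫_𝕜 = ⟪v a, Ta a x⟫_𝕜 := by
      intro x
      have h1 := (T.adjoint_isFormalAdjoint hdense_T) ⟨v, hv⟩ ⟨_, hsingle_mem a x⟩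
      rw [hT_single a x] at h1
      rw [lp.inner_single_right, lp.inner_single_right] at h1
      exact h1
    have hmem' : v a ∈ (Ta a).adjoint.domain :=
      LinearPMap.mem_adjoint_domain_of_exists _ ⟨(T.adjoint ⟨v, hv⟩) a, hid⟩
    exact ⟨hmem', fun hva => LinearPMap.adjoint_apply_eq (hdense a) ⟨v a, hva⟩ hid⟩
  -- backward direction
  have back : ∀ (v : lp F 2) (h : ∀ a, v a ∈ (Ta a).adjoint.domain),
      Memℓp (fun a => (Ta a).adjoint ⟨v a, h a⟩) 2 → v ∈ T.adjoint.domain := by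
    intro v h hm
    refine LinearPMap.mem_adjoint_domain_of_exists _
      ⟨(⟨fun a => (Ta a).adjoint ⟨v a, h a⟩, hm⟩ : lp E 2), ?_⟩
    intro u
    obtain ⟨hu', hmu⟩ := (hdom u).mp u.2
    rw [lp.inner_eq_tsum, lp.inner_eq_tsum]
    congr 1
    funext a
    rw [hval u u.2 hu' a]
    exact (LinearPMap.adjoint_isFormalAdjoint (hdense a)) ⟨v a, h a⟩ ⟨(u : lp E 2) a, hu' a⟩
  refine ⟨hdense_T, ?_, ?_⟩
  · intro v
    constructor
    · intro hv
      refine ⟨fun a => (key v hv a).1, ?_⟩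
      have h5 : (fun a => (Ta a).adjoint ⟨v a, (key v hv a).1⟩)
          = fun a => (T.adjoint ⟨v, hv⟩) a :=
        funext fun a => (key v hv a).2 _
      rw [h5]
      exact lp.memℓp _
    · rintro ⟨h, hm⟩
      exact back v h hm
  · intro v hv h a
    exact ((key v hv a).2 (h a)).symm
end

section
/- Let θ ≥ 1/2 and let φ : ℝ → ℝ be an even Schwartz function, and set ξ(ρ) = ρ^θ φ(ρ) for ρ > 0. Then there is a sequence (ξ_n) in C_c^∞((0,∞)) such that ξ_n → ξ in L²((0,∞)) and such that, for every pair of real numbers (α, β) for which the function η(ρ) = ξ'(ρ) + αρ^{−1}ξ(ρ) + βρ ξ(ρ) belongs to L²((0,∞)), one has ξ_n' + αρ^{−1}ξ_n + βρ ξ_n → η in L²((0,∞)). -/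
open MeasureTheory Set Filter

noncomputable def S11.bump : ContDiffBump (0:ℝ) := ⟨1, 2, one_pos, one_lt_two⟩
noncomputable def S11.psi : ℝ → ℝ := fun t => S11.bump t

noncomputable def S11.xin (θ : ℝ) (φ : ℝ → ℝ) (n : ℕ) (ρ : ℝ) : ℝ :=
  if 0 < ρ then S11.psi (Real.log ρ / (n+1)) * (ρ ^ θ * φ ρ) else 0

namespace S11

lemma psi_smooth : ContDiff ℝ (⊤ : ℕ∞) psi := bump.contDiff

lemma psi_one {t : ℝ} (h : |t| ≤ 1) : psi t = 1 := by
  apply bump.one_of_mem_closedBall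
  simpa [Metric.mem_closedBall, Real.dist_eq, S11.bump] using h

lemma psi_zero {t : ℝ} (h : 2 ≤ |t|) : psi t = 0 := by
  apply bump.zero_of_le_dist
  simpa [Real.dist_eq, S11.bump] using h

lemma psi_nonneg (t : ℝ) : 0 ≤ psi t := bump.nonneg

lemma psi_le_one (t : ℝ) : psi t ≤ 1 := bump.le_one

lemma dpsi_zero_of_lt {t : ℝ} (h : |t| < 1) : deriv psi t = 0 := by
  have : psi =ᶠ[nhds t] fun _ => 1 := by
    filter_upwards [Metric.ball_mem_nhds t (by linarith : (0:ℝ) < 1 - |t|)] with s hs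
    apply psi_one
    rw [Metric.mem_ball, Real.dist_eq] at hs
    calc |s| ≤ |s - t| + |t| := abs_sub_abs_le_abs_sub s t |> fun _ => by
          simpa using abs_add_le (s - t) t |>.trans_eq (by ring_nf)
      _ ≤ 1 := by linarith
  rw [this.deriv_eq]; simp

lemma dpsi_zero_of_gt {t : ℝ} (h : 2 < |t|) : deriv psi t = 0 := by
  have : psi =ᶠ[nhds t] fun _ => 0 := by
    filter_upwards [Metric.ball_mem_nhds t (by linarith : (0:ℝ) < |t| - 2)] with s hs
    apply psi_zero
    rw [Metric.mem_ball, Real.dist_eq] at hs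
    have : |t| - |s| ≤ |s - t| := by
      have := abs_sub_abs_le_abs_sub t s
      rwa [abs_sub_comm] at this
    linarith
  rw [this.deriv_eq]; simp

lemma dpsi_cont : Continuous (deriv psi) :=
  (psi_smooth.iterate_deriv 1).continuous

lemma exists_dpsi_bound : ∃ K : ℝ, 0 < K ∧ ∀ t, |deriv psi t| ≤ K := by
  have hcs : HasCompactSupport (deriv psi) := bump.hasCompactSupport.deriv
  obtain ⟨K, hK⟩ := hcs.exists_bound_of_continuous dpsi_cont
  refine ⟨max K 1, by positivity, fun t => ?_⟩
  have := hK t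
  rw [Real.norm_eq_abs] at this
  exact this.trans (le_max_left _ _)

variable {θ : ℝ} (φ : SchwartzMap ℝ ℝ)

lemma xin_eq_zero_of_small {n : ℕ} {ρ : ℝ} (h : ρ < Real.exp (-(2*(n+1):ℝ))) :
    xin θ (⇑φ) n ρ = 0 := by
  unfold xin
  split_ifs with hρ
  · have hlog : Real.log ρ < -(2*(n+1):ℝ) := by
      have := Real.log_lt_log hρ h
      rwa [Real.log_exp] at this
    have hn1 : (0:ℝ) < (n:ℝ)+1 := by positivity
    have : 2 ≤ |Real.log ρ / ((n:ℝ)+1)| := by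
      rw [abs_div, abs_of_pos hn1, le_div_iff₀ hn1]
      have : 2*((n:ℝ)+1) ≤ -Real.log ρ := by linarith
      calc 2*((n:ℝ)+1) ≤ -Real.log ρ := this
        _ ≤ |Real.log ρ| := neg_le_abs _
    rw [psi_zero this, zero_mul]
  · rfl

lemma xin_smooth (n : ℕ) : ContDiff ℝ (⊤ : ℕ∞) (xin θ (⇑φ) n) := by
  rw [contDiff_iff_contDiffAt]
  intro ρ₀
  rcases lt_or_ge 0 ρ₀ with h | h
  · have heq : xin θ (⇑φ) n =ᶠ[nhds ρ₀]
        fun ρ => psi (Real.log ρ / (n+1)) * (ρ ^ θ * φ ρ) := by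
      filter_upwards [Ioi_mem_nhds h] with ρ hρ
      simp [xin, mem_Ioi.mp hρ]
    apply ContDiffAt.congr_of_eventuallyEq ?_ heq
    apply ContDiffAt.mul
    · exact (psi_smooth.contDiffAt).comp ρ₀
        ((Real.contDiffAt_log.mpr (ne_of_gt h)).div_const _)
    · exact ((Real.contDiffAt_rpow_const_of_ne (ne_of_gt h)).mul
        ((φ.smooth ⊤).contDiffAt))
  · have heq : xin θ (⇑φ) n =ᶠ[nhds ρ₀] fun _ => 0 := by
      filter_upwards [Iio_mem_nhds (lt_of_le_of_lt h (Real.exp_pos _))] with ρ hρ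
      exact xin_eq_zero_of_small φ (mem_Iio.mp hρ)
    exact ContDiffAt.congr_of_eventuallyEq contDiffAt_const heq

lemma xin_test (n : ℕ) : ∀ ρ, xin θ (⇑φ) n ρ ≠ 0 →
    ρ ∈ Icc (Real.exp (-(2*(n+1):ℝ))) (Real.exp (2*(n+1):ℝ)) := by
  intro ρ hρ
  have hpos : 0 < ρ := by
    by_contra hc
    exact hρ (by simp [xin, hc, not_lt.mpr (not_lt.mp hc)] )
  have hψ : psi (Real.log ρ / (n+1)) ≠ 0 := by
    intro hz; exact hρ (by simp [xin, hpos, hz])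
  have habs : |Real.log ρ / ((n:ℝ)+1)| < 2 := by
    by_contra hc
    exact hψ (psi_zero (not_lt.mp hc))
  have hn1 : (0:ℝ) < (n:ℝ)+1 := by positivity
  rw [abs_div, abs_of_pos hn1, div_lt_iff₀ hn1] at habs
  have h1 : |Real.log ρ| < 2*((n:ℝ)+1) := by linarith
  rw [abs_lt] at h1
  constructor
  · rw [← Real.exp_log hpos]
    exact Real.exp_le_exp.mpr (by linarith)
  · rw [← Real.exp_log hpos]
    exact Real.exp_le_exp.mpr (by linarith)

lemma xi_hasDerivAt {ρ : ℝ} (hρ : 0 < ρ) :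
    HasDerivAt (fun x : ℝ => x ^ θ * φ x) (deriv (fun x : ℝ => x ^ θ * φ x) ρ) ρ := by
  have hd : DifferentiableAt ℝ (fun x : ℝ => x ^ θ * φ x) ρ :=
    ((Real.hasDerivAt_rpow_const (p := θ) (Or.inl hρ.ne')).differentiableAt).mul
      (φ.differentiable.differentiableAt)
  exact hd.hasDerivAt

lemma xin_hasDerivAt {n : ℕ} {ρ : ℝ} (hρ : 0 < ρ) :
    HasDerivAt (xin θ (⇑φ) n)
      (deriv psi (Real.log ρ / (n+1)) * (ρ⁻¹ / ((n:ℝ)+1)) * (ρ ^ θ * φ ρ)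
        + psi (Real.log ρ / (n+1)) * deriv (fun x : ℝ => x ^ θ * φ x) ρ) ρ := by
  have hψd : HasDerivAt (fun x : ℝ => psi (Real.log x / (n+1)))
      (deriv psi (Real.log ρ / (n+1)) * (ρ⁻¹ / ((n:ℝ)+1))) ρ := by
    have h1 : HasDerivAt (fun x : ℝ => Real.log x / ((n:ℝ)+1)) (ρ⁻¹ / ((n:ℝ)+1)) ρ :=
      (Real.hasDerivAt_log hρ.ne').div_const _
    have h2 : HasDerivAt psi (deriv psi (Real.log ρ / ((n:ℝ)+1))) (Real.log ρ / ((n:ℝ)+1)) :=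
      ((psi_smooth.differentiable (by simp)) _).hasDerivAt
    have := h2.comp ρ h1
    exact this
  have hmul := hψd.mul (xi_hasDerivAt (θ := θ) φ hρ)
  have heq : xin θ (⇑φ) n =ᶠ[nhds ρ]
      fun x => psi (Real.log x / (n+1)) * (x ^ θ * φ x) := by
    filter_upwards [Ioi_mem_nhds hρ] with x hx
    simp [xin, mem_Ioi.mp hx]
  exact hmul.congr_of_eventuallyEq heq

lemma exists_phi_bound : ∃ B : ℝ, 0 < B ∧ ∀ x, |φ x| ≤ B := by
  obtain ⟨C, hC, h⟩ := φ.decay 0 0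
  refine ⟨C, hC, fun x => ?_⟩
  have := h x
  simpa [norm_iteratedFDeriv_zero, Real.norm_eq_abs] using this

lemma exists_phi_decay : ∃ C : ℝ, 0 < C ∧ ∀ ρ : ℝ, 1 ≤ ρ → ρ ^ θ * |φ ρ| ≤ C / ρ := by
  set k : ℕ := ⌈θ⌉₊ + 1 with hk
  obtain ⟨C, hC, h⟩ := φ.decay k 0
  refine ⟨C, hC, fun ρ hρ => ?_⟩
  have hρ0 : (0:ℝ) < ρ := lt_of_lt_of_le one_pos hρ
  have hbd : ρ ^ (k:ℝ) * |φ ρ| ≤ C := by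
    have := h ρ
    rw [norm_iteratedFDeriv_zero, Real.norm_eq_abs, Real.norm_eq_abs,
      abs_of_pos hρ0] at this
    calc ρ ^ (k:ℝ) * |φ ρ| = ρ ^ k * |φ ρ| := by rw [Real.rpow_natCast]
      _ ≤ C := this
  have hθk : θ ≤ (k:ℝ) - 1 := by
    have := Nat.le_ceil θ
    push_cast [hk]
    push_cast at this
    linarith
  have h1 : ρ ^ θ ≤ ρ ^ ((k:ℝ) - 1) := Real.rpow_le_rpow_of_exponent_le hρ hθk
  have h2 : ρ ^ ((k:ℝ) - 1) = ρ ^ (k:ℝ) / ρ := by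
    rw [Real.rpow_sub hρ0, Real.rpow_one]
  calc ρ ^ θ * |φ ρ| ≤ ρ ^ ((k:ℝ) - 1) * |φ ρ| :=
        mul_le_mul_of_nonneg_right h1 (abs_nonneg _)
    _ = ρ ^ (k:ℝ) * |φ ρ| / ρ := by rw [h2]; ring
    _ ≤ C / ρ := by gcongr

lemma theta_pos (hθ : 1/2 ≤ θ) : (0:ℝ) < θ := lt_of_lt_of_le (by norm_num) hθ

lemma xi_continuous (hθ : 1/2 ≤ θ) : Continuous (fun x : ℝ => x ^ θ * φ x) :=
  (Real.continuous_rpow_const (theta_pos hθ).le).mul φ.continuous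

lemma xi_sq_integrableOn (hθ : 1/2 ≤ θ) :
    IntegrableOn (fun ρ : ℝ => (ρ ^ θ * φ ρ)^2) (Ioi 0) volume := by
  obtain ⟨B, hB0, hB⟩ := exists_phi_bound φ
  obtain ⟨C, hC0, hC⟩ := exists_phi_decay (θ := θ) φ
  rw [← Ioc_union_Ioi_eq_Ioi (zero_le_one (α := ℝ))]
  apply IntegrableOn.union
  · apply Measure.integrableOn_of_bounded (M := B^2) measure_Ioc_lt_top.ne
      ((xi_continuous φ hθ).pow 2).aestronglyMeasurable
    rw [ae_restrict_iff' measurableSet_Ioc]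
    refine ae_of_all _ fun ρ hρ => ?_
    have h1 : ρ ^ θ ≤ 1 := Real.rpow_le_one hρ.1.le hρ.2 (theta_pos hθ).le
    have h0 : 0 ≤ ρ ^ θ := Real.rpow_nonneg hρ.1.le θ
    simp only [Pi.pow_apply]
    rw [Real.norm_eq_abs, abs_pow, abs_mul, abs_of_nonneg h0]
    calc (ρ ^ θ * |φ ρ|)^2 ≤ (1 * B)^2 := by
          apply pow_le_pow_left₀ (by positivity)
          exact mul_le_mul h1 (hB ρ) (abs_nonneg _) zero_le_one
      _ = B^2 := by ring
  · apply Integrable.mono' (g := fun ρ : ℝ => C^2 * ρ ^ (-2:ℝ))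
    · exact (integrableOn_Ioi_rpow_of_lt (by norm_num) one_pos).const_mul _
    · exact ((xi_continuous φ hθ).pow 2).aestronglyMeasurable
    · rw [ae_restrict_iff' measurableSet_Ioi]
      refine ae_of_all _ fun ρ hρ => ?_
      have hρ1 : (1:ℝ) ≤ ρ := (mem_Ioi.mp hρ).le
      have hρ0 : (0:ℝ) < ρ := lt_of_lt_of_le one_pos hρ1
      have h0 : 0 ≤ ρ ^ θ := Real.rpow_nonneg hρ0.le θ
      rw [Real.norm_eq_abs, abs_pow, abs_mul, abs_of_nonneg h0]
      calc (ρ ^ θ * |φ ρ|)^2 ≤ (C / ρ)^2 := by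
            apply pow_le_pow_left₀ (by positivity) (hC ρ hρ1)
        _ = C^2 * ρ ^ (-2:ℝ) := by
            have : ρ ^ (-2:ℝ) = (ρ^2)⁻¹ := by
              rw [Real.rpow_neg hρ0.le]
              norm_num [Real.rpow_natCast ρ 2]
            rw [this, div_pow, div_eq_mul_inv]

lemma cut_eventually_one {ρ : ℝ} (hρ : 0 < ρ) :
    ∀ᶠ n : ℕ in atTop, psi (Real.log ρ / ((n:ℝ)+1)) = 1 := by
  filter_upwards [eventually_ge_atTop ⌈|Real.log ρ|⌉₊] with n hn
  apply psi_one
  have hn1 : (0:ℝ) < (n:ℝ)+1 := by positivity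
  rw [abs_div, abs_of_pos hn1, div_le_one hn1]
  calc |Real.log ρ| ≤ (⌈|Real.log ρ|⌉₊ : ℝ) := Nat.le_ceil _
    _ ≤ (n:ℝ) := by exact_mod_cast hn
    _ ≤ (n:ℝ) + 1 := by linarith

end S11

noncomputable def S11.uu (θ : ℝ) (φ : ℝ → ℝ) (n : ℕ) (ρ : ℝ) : ℝ :=
  deriv S11.psi (Real.log ρ / ((n:ℝ)+1)) * (ρ⁻¹ / ((n:ℝ)+1)) * (ρ ^ θ * φ ρ)

noncomputable def S11.eta (θ α β : ℝ) (φ : ℝ → ℝ) (ρ : ℝ) : ℝ :=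
  deriv (fun x : ℝ => x ^ θ * φ x) ρ + α * ρ⁻¹ * (ρ ^ θ * φ ρ) + β * ρ * (ρ ^ θ * φ ρ)

noncomputable def S11.ww (θ α β : ℝ) (φ : ℝ → ℝ) (n : ℕ) (ρ : ℝ) : ℝ :=
  (S11.psi (Real.log ρ / ((n:ℝ)+1)) - 1) * S11.eta θ α β φ ρ


/-- A test function: smooth, compactly supported, with support contained in `(0,∞)`. -/
def IsTestOnIoi (φ : ℝ → ℝ) : Prop :=
  ContDiff ℝ (⊤ : ℕ∞) φ ∧ HasCompactSupport φ ∧ tsupport φ ⊆ Set.Ioi 0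

set_option maxHeartbeats 1000000 in
/-- Let `θ ≥ 1/2`, let `φ` be an even Schwartz function, and set
`ξ(ρ) = ρ^θ φ(ρ)` for `ρ > 0`. Then there is a sequence `xin ∈ C_c^∞((0,∞))` with
`xin → ξ` in `L²((0,∞))` and such that, for every `(α, β)` for which
`η = ξ' + αρ⁻¹ξ + βρξ` lies in `L²((0,∞))`, also `xin' + αρ⁻¹ξₙ + βρξₙ → η` in `L²((0,∞))`. -/
theorem statement11 (θ : ℝ) (hθ : 1/2 ≤ θ) (φ : SchwartzMap ℝ ℝ)
    (hφ : ∀ x : ℝ, φ (-x) = φ x) :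
    ∃ ξn : ℕ → ℝ → ℝ, (∀ n, IsTestOnIoi (ξn n)) ∧
      Tendsto (fun n => ∫ ρ in Set.Ioi (0:ℝ),
          (ξn n ρ - ρ ^ θ * φ ρ) ^ 2) atTop (nhds 0) ∧
      ∀ α β : ℝ,
        MemLp (fun ρ : ℝ => deriv (fun x : ℝ => x ^ θ * φ x) ρ
            + α * ρ⁻¹ * (ρ ^ θ * φ ρ) + β * ρ * (ρ ^ θ * φ ρ)) 2
          (volume.restrict (Set.Ioi 0)) →
        Tendsto (fun n => ∫ ρ in Set.Ioi (0:ℝ),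
            (deriv (ξn n) ρ + α * ρ⁻¹ * ξn n ρ + β * ρ * ξn n ρ
              - (deriv (fun x : ℝ => x ^ θ * φ x) ρ
                + α * ρ⁻¹ * (ρ ^ θ * φ ρ) + β * ρ * (ρ ^ θ * φ ρ))) ^ 2)
          atTop (nhds 0) := by
  classical
  refine ⟨S11.xin θ (⇑φ), fun n => ?_, ?_, ?_⟩
  · -- test function property
    refine ⟨S11.xin_smooth φ n, ?_, ?_⟩
    · apply HasCompactSupport.intro (isCompact_Icc
        (a := Real.exp (-(2*(n+1):ℝ))) (b := Real.exp (2*(n+1):ℝ)))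
      intro x hx
      by_contra hc
      exact hx (S11.xin_test φ n x hc)
    · have hsub : Function.support (S11.xin θ (⇑φ) n) ⊆
          Icc (Real.exp (-(2*(n+1):ℝ))) (Real.exp (2*(n+1):ℝ)) :=
        fun x hx => S11.xin_test φ n x hx
      have h2 : tsupport (S11.xin θ (⇑φ) n) ⊆
          Icc (Real.exp (-(2*(n+1):ℝ))) (Real.exp (2*(n+1):ℝ)) :=
        closure_minimal hsub isClosed_Icc
      exact h2.trans (fun x hx => lt_of_lt_of_le (Real.exp_pos _) hx.1)
  · -- first convergence
    have h0 : (0:ℝ) = ∫ ρ in Set.Ioi (0:ℝ), (0:ℝ) := by simp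
    rw [show nhds (0:ℝ) = nhds (∫ ρ in Set.Ioi (0:ℝ), (0:ℝ)) by rw [← h0]]
    apply tendsto_integral_of_dominated_convergence
      (bound := fun ρ => (ρ ^ θ * φ ρ)^2)
    · intro n
      apply Continuous.aestronglyMeasurable
      exact (((S11.xin_smooth φ n).continuous.sub (S11.xi_continuous φ hθ)).pow 2)
    · exact S11.xi_sq_integrableOn φ hθ
    · intro n
      rw [ae_restrict_iff' measurableSet_Ioi]
      refine ae_of_all _ fun ρ hρ => ?_
      have hρ0 : 0 < ρ := mem_Ioi.mp hρ
      have hx : S11.xin θ (⇑φ) n ρ = S11.psi (Real.log ρ / (n+1)) * (ρ ^ θ * φ ρ) := by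
        simp [S11.xin, hρ0]
      rw [Real.norm_eq_abs, hx, abs_of_nonneg (sq_nonneg _)]
      have : S11.psi (Real.log ρ / (n+1)) * (ρ ^ θ * φ ρ) - ρ ^ θ * φ ρ
          = (S11.psi (Real.log ρ / (n+1)) - 1) * (ρ ^ θ * φ ρ) := by ring
      rw [this, mul_pow]
      have habs : (S11.psi (Real.log ρ / (n+1)) - 1)^2 ≤ 1 := by
        have h1 := S11.psi_nonneg (Real.log ρ / (n+1))
        have h2 := S11.psi_le_one (Real.log ρ / (n+1))
        nlinarith
      nlinarith [sq_nonneg (ρ ^ θ * φ ρ)]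
    · rw [ae_restrict_iff' measurableSet_Ioi]
      refine ae_of_all _ fun ρ hρ => ?_
      have hρ0 : 0 < ρ := mem_Ioi.mp hρ
      apply Tendsto.congr' ?_ tendsto_const_nhds
      filter_upwards [S11.cut_eventually_one hρ0] with n hn
      have hx : S11.xin θ (⇑φ) n ρ = S11.psi (Real.log ρ / (n+1)) * (ρ ^ θ * φ ρ) := by
        simp [S11.xin, hρ0]
      push_cast at hn
      rw [hx, hn, one_mul]
      ring
  · -- second convergence
    intro α β hmem
    obtain ⟨B, hB0, hB⟩ := S11.exists_phi_bound φ
    obtain ⟨C, hC0, hC⟩ := S11.exists_phi_decay (θ := θ) φ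
    obtain ⟨K, hK0, hK⟩ := S11.exists_dpsi_bound
    have hmem' : MemLp (S11.eta θ α β (⇑φ)) 2 (volume.restrict (Set.Ioi 0)) := hmem
    -- measurability
    have hξm : Measurable (fun x : ℝ => x ^ θ * φ x) := (S11.xi_continuous φ hθ).measurable
    have hdξm : Measurable (deriv (fun x : ℝ => x ^ θ * φ x)) :=
      measurable_deriv _
    have hηm : Measurable (S11.eta θ α β (⇑φ)) := by
      unfold S11.eta
      apply (hdξm.add ((measurable_const.mul measurable_inv).mul hξm)).add
      exact (measurable_const.mul measurable_id).mul hξm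
    have hum : ∀ n, Measurable (S11.uu θ (⇑φ) n) := by
      intro n
      unfold S11.uu
      apply Measurable.mul ?_ hξm
      apply Measurable.mul
      · exact S11.dpsi_cont.measurable.comp (Real.measurable_log.div_const _)
      · exact measurable_inv.div_const _
    have hwm : ∀ n, Measurable (S11.ww θ α β (⇑φ) n) := by
      intro n
      unfold S11.ww
      apply Measurable.mul ?_ hηm
      exact ((S11.psi_smooth.continuous.measurable).comp
        (Real.measurable_log.div_const _)).sub measurable_const
    -- basic bounds
    have hn1pos : ∀ n : ℕ, (0:ℝ) < (n:ℝ) + 1 := fun n => by positivity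
    have hrecip : ∀ n : ℕ, ∀ ρ : ℝ, 0 < ρ → ρ⁻¹ / ((n:ℝ)+1) ≤ ρ⁻¹ := by
      intro n ρ hρ0
      calc ρ⁻¹ / ((n:ℝ)+1) ≤ ρ⁻¹ / 1 := by
            apply div_le_div_of_nonneg_left (by positivity) one_pos
            linarith [Nat.cast_nonneg (α := ℝ) n]
        _ = ρ⁻¹ := div_one _
    have hξbd2 : ∀ ρ : ℝ, 1 ≤ ρ → |ρ ^ θ * φ ρ| ≤ C / ρ := by
      intro ρ hρ
      have h0 : 0 ≤ ρ ^ θ := Real.rpow_nonneg (by linarith) θ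
      rw [abs_mul, abs_of_nonneg h0]
      exact hC ρ hρ
    -- key derivative identity on (0,∞)
    have hkey : ∀ n, ∀ ρ : ℝ, 0 < ρ →
        deriv (S11.xin θ (⇑φ) n) ρ + α * ρ⁻¹ * S11.xin θ (⇑φ) n ρ
          + β * ρ * S11.xin θ (⇑φ) n ρ - S11.eta θ α β (⇑φ) ρ
        = S11.uu θ (⇑φ) n ρ + S11.ww θ α β (⇑φ) n ρ := by
      intro n ρ hρ
      have hd := (S11.xin_hasDerivAt (θ := θ) φ (n := n) hρ).deriv
      have hx : S11.xin θ (⇑φ) n ρ = S11.psi (Real.log ρ / ((n:ℝ)+1)) * (ρ ^ θ * φ ρ) := by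
        simp [S11.xin, hρ]
      push_cast at hd
      rw [hd, hx]
      unfold S11.uu S11.ww S11.eta
      ring
    -- w² : integrability and convergence
    have hη2 : Integrable (fun ρ => (S11.eta θ α β (⇑φ) ρ) ^ 2) (volume.restrict (Ioi 0)) :=
      hmem'.integrable_sq
    have hwsq_le : ∀ n, ∀ ρ : ℝ, (S11.ww θ α β (⇑φ) n ρ)^2 ≤ (S11.eta θ α β (⇑φ) ρ) ^ 2 := by
      intro n ρ
      unfold S11.ww
      have h1 := S11.psi_nonneg (Real.log ρ / ((n:ℝ)+1))
      have h2 := S11.psi_le_one (Real.log ρ / ((n:ℝ)+1))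
      have h3 : (S11.psi (Real.log ρ / ((n:ℝ)+1)) - 1)^2 ≤ 1 := by nlinarith
      calc ((S11.psi (Real.log ρ / ((n:ℝ)+1)) - 1) * S11.eta θ α β (⇑φ) ρ)^2
          = (S11.psi (Real.log ρ / ((n:ℝ)+1)) - 1)^2 * (S11.eta θ α β (⇑φ) ρ)^2 := by ring
        _ ≤ 1 * (S11.eta θ α β (⇑φ) ρ)^2 := mul_le_mul_of_nonneg_right h3 (sq_nonneg _)
        _ = (S11.eta θ α β (⇑φ) ρ)^2 := one_mul _
    have hw2int : ∀ n, Integrable (fun ρ => (S11.ww θ α β (⇑φ) n ρ)^2)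
        (volume.restrict (Ioi 0)) := by
      intro n
      apply Integrable.mono' hη2 (((hwm n).pow_const 2).aestronglyMeasurable)
      refine ae_of_all _ fun ρ => ?_
      rw [Real.norm_eq_abs, abs_of_nonneg (sq_nonneg _)]
      exact hwsq_le n ρ
    have hIw : Tendsto (fun n => ∫ ρ in Ioi (0:ℝ), (S11.ww θ α β (⇑φ) n ρ)^2)
        atTop (nhds 0) := by
      have h0 : (0:ℝ) = ∫ ρ in Set.Ioi (0:ℝ), (0:ℝ) := by simp
      rw [show nhds (0:ℝ) = nhds (∫ ρ in Set.Ioi (0:ℝ), (0:ℝ)) by rw [← h0]]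
      apply tendsto_integral_of_dominated_convergence
        (bound := fun ρ => (S11.eta θ α β (⇑φ) ρ) ^ 2)
      · exact fun n => (((hwm n).pow_const 2).aestronglyMeasurable)
      · exact hη2
      · intro n
        refine ae_of_all _ fun ρ => ?_
        rw [Real.norm_eq_abs, abs_of_nonneg (sq_nonneg _)]
        exact hwsq_le n ρ
      · rw [ae_restrict_iff' measurableSet_Ioi]
        refine ae_of_all _ fun ρ hρ => ?_
        apply Tendsto.congr' ?_ tendsto_const_nhds
        filter_upwards [S11.cut_eventually_one (mem_Ioi.mp hρ)] with n hn
        unfold S11.ww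
        rw [hn]
        ring
    -- u² on (1,∞)
    have husq_Ioi1 : ∀ n, ∀ ρ : ℝ, 1 ≤ ρ →
        (S11.uu θ (⇑φ) n ρ)^2 ≤ K^2 * C^2 * ρ ^ (-4:ℝ) := by
      intro n ρ hρ
      have hρ0 : (0:ℝ) < ρ := lt_of_lt_of_le one_pos hρ
      have h1 : |S11.uu θ (⇑φ) n ρ| ≤ K * ρ⁻¹ * (C / ρ) := by
        unfold S11.uu
        calc |deriv S11.psi (Real.log ρ / ((n:ℝ)+1)) * (ρ⁻¹ / ((n:ℝ)+1)) * (ρ ^ θ * φ ρ)|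
            = |deriv S11.psi (Real.log ρ / ((n:ℝ)+1))| * |ρ⁻¹ / ((n:ℝ)+1)| * |ρ ^ θ * φ ρ| := by
              rw [abs_mul, abs_mul]
          _ ≤ K * ρ⁻¹ * (C / ρ) := by
              apply mul_le_mul ?_ (hξbd2 ρ hρ) (abs_nonneg _) (by positivity)
              apply mul_le_mul (hK _) ?_ (abs_nonneg _) hK0.le
              rw [abs_of_nonneg (by positivity : (0:ℝ) ≤ ρ⁻¹ / ((n:ℝ)+1))]
              exact hrecip n ρ hρ0
      have h2 : (S11.uu θ (⇑φ) n ρ)^2 ≤ (K * ρ⁻¹ * (C / ρ))^2 :=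
        sq_le_sq' (by linarith [neg_abs_le (S11.uu θ (⇑φ) n ρ)])
          (by linarith [le_abs_self (S11.uu θ (⇑φ) n ρ)])
      refine h2.trans (le_of_eq ?_)
      have h4 : ρ ^ (-4:ℝ) = (ρ^4)⁻¹ := by
        rw [Real.rpow_neg hρ0.le]
        rw [← Real.rpow_natCast ρ 4]; norm_num
      rw [h4]
      field_simp
    have hr4 : IntegrableOn (fun ρ : ℝ => K^2 * C^2 * ρ ^ (-4:ℝ)) (Ioi 1) volume :=
      (integrableOn_Ioi_rpow_of_lt (by norm_num) one_pos).const_mul _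
    have hu2int_Ioi1 : ∀ n, IntegrableOn (fun ρ => (S11.uu θ (⇑φ) n ρ)^2) (Ioi 1) volume := by
      intro n
      apply Integrable.mono' hr4 (((hum n).pow_const 2).aestronglyMeasurable.restrict)
      rw [ae_restrict_iff' measurableSet_Ioi]
      refine ae_of_all _ fun ρ hρ => ?_
      rw [Real.norm_eq_abs, abs_of_nonneg (sq_nonneg _)]
      exact husq_Ioi1 n ρ (mem_Ioi.mp hρ).le
    have hIb : Tendsto (fun n => ∫ ρ in Ioi (1:ℝ), (S11.uu θ (⇑φ) n ρ)^2) atTop (nhds 0) := by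
      have h0 : (0:ℝ) = ∫ ρ in Set.Ioi (1:ℝ), (0:ℝ) := by simp
      rw [show nhds (0:ℝ) = nhds (∫ ρ in Set.Ioi (1:ℝ), (0:ℝ)) by rw [← h0]]
      apply tendsto_integral_of_dominated_convergence
        (bound := fun ρ => K^2 * C^2 * ρ ^ (-4:ℝ))
      · exact fun n => (((hum n).pow_const 2).aestronglyMeasurable.restrict)
      · exact hr4
      · intro n
        rw [ae_restrict_iff' measurableSet_Ioi]
        refine ae_of_all _ fun ρ hρ => ?_
        rw [Real.norm_eq_abs, abs_of_nonneg (sq_nonneg _)]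
        exact husq_Ioi1 n ρ (mem_Ioi.mp hρ).le
      · rw [ae_restrict_iff' measurableSet_Ioi]
        refine ae_of_all _ fun ρ hρ => ?_
        apply Tendsto.congr' ?_ tendsto_const_nhds
        filter_upwards [eventually_ge_atTop ⌈|Real.log ρ|⌉₊] with n hn
        have habs : |Real.log ρ / ((n:ℝ)+1)| < 1 := by
          rw [abs_div, abs_of_pos (hn1pos n), div_lt_one (hn1pos n)]
          calc |Real.log ρ| ≤ (⌈|Real.log ρ|⌉₊ : ℝ) := Nat.le_ceil _
            _ ≤ (n:ℝ) := by exact_mod_cast hn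
            _ < (n:ℝ) + 1 := by linarith
        unfold S11.uu
        rw [S11.dpsi_zero_of_lt habs]
        ring
    -- u² on (0,1] : explicit bound
    have husq_Ioc : ∀ n, ∀ ρ : ℝ, ρ ∈ Ioc (0:ℝ) 1 →
        (S11.uu θ (⇑φ) n ρ)^2 ≤ (K^2 * B^2 / ((n:ℝ)+1)^2) *
          (Icc (Real.exp (-(2*((n:ℝ)+1)))) 1).indicator (fun ρ => ρ⁻¹) ρ := by
      intro n ρ hρ
      have hρ0 : (0:ℝ) < ρ := hρ.1
      have hind_nonneg : 0 ≤ (Icc (Real.exp (-(2*((n:ℝ)+1)))) 1).indicator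
          (fun ρ : ℝ => ρ⁻¹) ρ := by
        apply Set.indicator_nonneg
        intro x hx
        have : 0 < x := lt_of_lt_of_le (Real.exp_pos _) hx.1
        positivity
      by_cases hz : deriv S11.psi (Real.log ρ / ((n:ℝ)+1)) = 0
      · unfold S11.uu
        rw [hz]
        simpa using mul_nonneg (by positivity) hind_nonneg
      · have habs : |Real.log ρ / ((n:ℝ)+1)| ≤ 2 := by
          by_contra hc
          exact hz (S11.dpsi_zero_of_gt (not_le.mp hc))
        have hmem_icc : ρ ∈ Icc (Real.exp (-(2*((n:ℝ)+1)))) 1 := by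
          constructor
          · rw [abs_div, abs_of_pos (hn1pos n), div_le_iff₀ (hn1pos n)] at habs
            have hlog : -(2*((n:ℝ)+1)) ≤ Real.log ρ := by
              have := neg_abs_le (Real.log ρ)
              linarith
            calc Real.exp (-(2*((n:ℝ)+1))) ≤ Real.exp (Real.log ρ) :=
                  Real.exp_le_exp.mpr hlog
              _ = ρ := Real.exp_log hρ0
          · exact hρ.2
        rw [Set.indicator_of_mem hmem_icc]
        have hb1 : |S11.uu θ (⇑φ) n ρ| ≤ K / ((n:ℝ)+1) * (ρ⁻¹ * ρ ^ θ) * B := by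
          unfold S11.uu
          calc |deriv S11.psi (Real.log ρ / ((n:ℝ)+1)) * (ρ⁻¹ / ((n:ℝ)+1)) * (ρ ^ θ * φ ρ)|
              = |deriv S11.psi (Real.log ρ / ((n:ℝ)+1))| * (ρ⁻¹ / ((n:ℝ)+1))
                  * (ρ ^ θ * |φ ρ|) := by
                rw [abs_mul, abs_mul, abs_of_nonneg (by positivity : (0:ℝ) ≤ ρ⁻¹ / ((n:ℝ)+1)),
                  abs_mul, abs_of_nonneg (Real.rpow_nonneg hρ0.le θ)]
            _ ≤ K * (ρ⁻¹ / ((n:ℝ)+1)) * (ρ ^ θ * B) := by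
                apply mul_le_mul ?_ ?_ (by positivity) (by positivity)
                · exact mul_le_mul_of_nonneg_right (hK _) (by positivity)
                · exact mul_le_mul_of_nonneg_left (hB ρ) (Real.rpow_nonneg hρ0.le θ)
            _ = K / ((n:ℝ)+1) * (ρ⁻¹ * ρ ^ θ) * B := by ring
        have hsq : (S11.uu θ (⇑φ) n ρ)^2 ≤ (K / ((n:ℝ)+1) * (ρ⁻¹ * ρ ^ θ) * B)^2 :=
          sq_le_sq' (by linarith [neg_abs_le (S11.uu θ (⇑φ) n ρ)])
            (by linarith [le_abs_self (S11.uu θ (⇑φ) n ρ)])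
        refine hsq.trans ?_
        have hpow : (ρ ^ θ)^2 ≤ ρ := by
          have h2θ : (ρ ^ θ)^2 = ρ ^ (θ*2) := by
            rw [← Real.rpow_natCast (ρ ^ θ) 2, ← Real.rpow_mul hρ0.le]
            norm_num
          rw [h2θ]
          calc ρ ^ (θ*2) ≤ ρ ^ (1:ℝ) :=
                Real.rpow_le_rpow_of_exponent_ge hρ0 hρ.2 (by linarith)
            _ = ρ := Real.rpow_one ρ
        calc (K / ((n:ℝ)+1) * (ρ⁻¹ * ρ ^ θ) * B)^2
            = (K^2 * B^2 / ((n:ℝ)+1)^2) * ((ρ⁻¹)^2 * (ρ ^ θ)^2) := by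
              field_simp
          _ ≤ (K^2 * B^2 / ((n:ℝ)+1)^2) * ((ρ⁻¹)^2 * ρ) := by
              apply mul_le_mul_of_nonneg_left ?_ (by positivity)
              exact mul_le_mul_of_nonneg_left hpow (by positivity)
          _ = (K^2 * B^2 / ((n:ℝ)+1)^2) * ρ⁻¹ := by
              have hx : ρ⁻¹ * ρ = 1 := inv_mul_cancel₀ hρ0.ne'
              calc (K^2 * B^2 / ((n:ℝ)+1)^2) * ((ρ⁻¹)^2 * ρ)
                  = (K^2 * B^2 / ((n:ℝ)+1)^2) * (ρ⁻¹ * (ρ⁻¹ * ρ)) := by ring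
                _ = (K^2 * B^2 / ((n:ℝ)+1)^2) * ρ⁻¹ := by rw [hx, mul_one]
    -- integrability of the indicator bound and of u² on (0,1]
    have hgint : ∀ n : ℕ, IntegrableOn (fun ρ : ℝ => (K^2 * B^2 / ((n:ℝ)+1)^2) *
        (Icc (Real.exp (-(2*((n:ℝ)+1)))) 1).indicator (fun ρ => ρ⁻¹) ρ) (Ioc 0 1) volume := by
      intro n
      set e : ℝ := Real.exp (-(2*((n:ℝ)+1))) with hedef
      refine Measure.integrableOn_of_bounded (M := |K^2 * B^2 / ((n:ℝ)+1)^2| * e⁻¹)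
        measure_Ioc_lt_top.ne ?_ ?_
      · exact ((measurable_inv.indicator measurableSet_Icc).const_mul _).aestronglyMeasurable
      · refine ae_of_all _ fun ρ => ?_
        rw [Real.norm_eq_abs, abs_mul]
        by_cases hmemI : ρ ∈ Icc e 1
        · rw [Set.indicator_of_mem hmemI]
          have he0 : 0 < e := Real.exp_pos _
          have hρ0 : 0 < ρ := lt_of_lt_of_le he0 hmemI.1
          have : |ρ⁻¹| = ρ⁻¹ := abs_of_pos (by positivity)
          rw [this]
          apply mul_le_mul_of_nonneg_left ?_ (abs_nonneg _)
          exact inv_anti₀ he0 hmemI.1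
        · rw [Set.indicator_of_notMem hmemI]
          simp only [abs_zero, mul_zero]
          positivity
    have hu2int_Ioc : ∀ n, IntegrableOn (fun ρ => (S11.uu θ (⇑φ) n ρ)^2) (Ioc 0 1) volume := by
      intro n
      apply Integrable.mono' (hgint n) (((hum n).pow_const 2).aestronglyMeasurable.restrict)
      rw [ae_restrict_iff' measurableSet_Ioc]
      refine ae_of_all _ fun ρ hρ => ?_
      rw [Real.norm_eq_abs, abs_of_nonneg (sq_nonneg _)]
      exact husq_Ioc n ρ hρ
    -- value of the bound integral
    have hIa_le : ∀ n : ℕ, ∫ ρ in Ioc (0:ℝ) 1, (S11.uu θ (⇑φ) n ρ)^2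
        ≤ 2 * K^2 * B^2 / ((n:ℝ)+1) := by
      intro n
      set e : ℝ := Real.exp (-(2*((n:ℝ)+1))) with hedef
      have he0 : 0 < e := Real.exp_pos _
      have he1 : e ≤ 1 := by
        rw [hedef]
        apply Real.exp_le_one_iff.mpr
        have : (0:ℝ) ≤ (n:ℝ) := Nat.cast_nonneg n
        linarith
      have step1 : ∫ ρ in Ioc (0:ℝ) 1, (S11.uu θ (⇑φ) n ρ)^2
          ≤ ∫ ρ in Ioc (0:ℝ) 1, (K^2 * B^2 / ((n:ℝ)+1)^2) *
              (Icc e 1).indicator (fun ρ => ρ⁻¹) ρ := by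
        apply setIntegral_mono_on (hu2int_Ioc n) (hgint n) measurableSet_Ioc
        exact fun ρ hρ => husq_Ioc n ρ hρ
      have hsub : Icc e 1 ⊆ Ioc (0:ℝ) 1 := fun x hx => ⟨lt_of_lt_of_le he0 hx.1, hx.2⟩
      have step2 : ∫ ρ in Ioc (0:ℝ) 1, (K^2 * B^2 / ((n:ℝ)+1)^2) *
          (Icc e 1).indicator (fun ρ => ρ⁻¹) ρ
          = (K^2 * B^2 / ((n:ℝ)+1)^2) * ∫ ρ in Icc e 1, ρ⁻¹ := by
        rw [MeasureTheory.integral_const_mul, setIntegral_indicator measurableSet_Icc,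
          Set.inter_eq_right.mpr hsub]
      have step3 : ∫ ρ in Icc e 1, (ρ:ℝ)⁻¹ = 2*((n:ℝ)+1) := by
        rw [integral_Icc_eq_integral_Ioc]
        rw [← intervalIntegral.integral_of_le he1]
        rw [integral_inv]
        · rw [hedef]
          rw [one_div, ← Real.exp_neg]
          rw [Real.log_exp]
          ring
        · intro hc
          rw [Set.uIcc_of_le he1] at hc
          exact absurd hc.1 (not_le.mpr he0)
      rw [step3] at step2
      refine step1.trans (le_of_eq ?_)
      rw [step2]
      field_simp

    have hIa : Tendsto (fun n => ∫ ρ in Ioc (0:ℝ) 1, (S11.uu θ (⇑φ) n ρ)^2)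
        atTop (nhds 0) := by
      apply squeeze_zero (fun n => integral_nonneg fun ρ => sq_nonneg _) hIa_le
      have hn : Tendsto (fun n : ℕ => ((n:ℝ)+1)) atTop atTop :=
        tendsto_atTop_add_const_right _ 1 tendsto_natCast_atTop_atTop
      simpa using Tendsto.div_atTop (tendsto_const_nhds (x := 2*K^2*B^2)) hn
    have hu2int : ∀ n, IntegrableOn (fun ρ => (S11.uu θ (⇑φ) n ρ)^2) (Ioi 0) volume := by
      intro n
      rw [← Ioc_union_Ioi_eq_Ioi (zero_le_one (α := ℝ))]
      exact (hu2int_Ioc n).union (hu2int_Ioi1 n)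
    have hsplit : ∀ n, ∫ ρ in Ioi (0:ℝ), (S11.uu θ (⇑φ) n ρ)^2
        = (∫ ρ in Ioc (0:ℝ) 1, (S11.uu θ (⇑φ) n ρ)^2)
          + ∫ ρ in Ioi (1:ℝ), (S11.uu θ (⇑φ) n ρ)^2 := by
      intro n
      rw [← setIntegral_union (Ioc_disjoint_Ioi le_rfl) measurableSet_Ioi
        (hu2int_Ioc n) (hu2int_Ioi1 n), Ioc_union_Ioi_eq_Ioi (zero_le_one (α := ℝ))]
    have hIu : Tendsto (fun n => ∫ ρ in Ioi (0:ℝ), (S11.uu θ (⇑φ) n ρ)^2)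
        atTop (nhds 0) := by
      have h := hIa.add hIb
      rw [add_zero] at h
      exact Tendsto.congr (fun n => (hsplit n).symm) h
    have hg2 : ∀ n, Integrable
        (fun ρ => 2*(S11.uu θ (⇑φ) n ρ)^2 + 2*(S11.ww θ α β (⇑φ) n ρ)^2)
        (volume.restrict (Ioi 0)) := by
      intro n
      have h1 : Integrable (fun ρ => 2*(S11.uu θ (⇑φ) n ρ)^2) (volume.restrict (Ioi 0)) :=
        (hu2int n).const_mul 2
      have h2 : Integrable (fun ρ => 2*(S11.ww θ α β (⇑φ) n ρ)^2) (volume.restrict (Ioi 0)) :=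
        (hw2int n).const_mul 2
      exact h1.add h2
    have huw2int : ∀ n, Integrable
        (fun ρ => (S11.uu θ (⇑φ) n ρ + S11.ww θ α β (⇑φ) n ρ)^2)
        (volume.restrict (Ioi 0)) := by
      intro n
      apply Integrable.mono' (hg2 n)
        ((((hum n).add (hwm n)).pow_const 2).aestronglyMeasurable)
      refine ae_of_all _ fun ρ => ?_
      rw [Real.norm_eq_abs, abs_of_nonneg (sq_nonneg _)]
      simp only [Pi.add_apply]
      nlinarith [sq_nonneg (S11.uu θ (⇑φ) n ρ - S11.ww θ α β (⇑φ) n ρ)]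
    have hbound : ∀ n, ∫ ρ in Ioi (0:ℝ),
        (S11.uu θ (⇑φ) n ρ + S11.ww θ α β (⇑φ) n ρ)^2
        ≤ 2*(∫ ρ in Ioi (0:ℝ), (S11.uu θ (⇑φ) n ρ)^2)
          + 2*(∫ ρ in Ioi (0:ℝ), (S11.ww θ α β (⇑φ) n ρ)^2) := by
      intro n
      have h1 : ∫ ρ in Ioi (0:ℝ), (S11.uu θ (⇑φ) n ρ + S11.ww θ α β (⇑φ) n ρ)^2
          ≤ ∫ ρ in Ioi (0:ℝ),
              (2*(S11.uu θ (⇑φ) n ρ)^2 + 2*(S11.ww θ α β (⇑φ) n ρ)^2) := by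
        apply integral_mono (huw2int n) (hg2 n)
        intro ρ
        show (S11.uu θ (⇑φ) n ρ + S11.ww θ α β (⇑φ) n ρ)^2
          ≤ 2*(S11.uu θ (⇑φ) n ρ)^2 + 2*(S11.ww θ α β (⇑φ) n ρ)^2
        nlinarith [sq_nonneg (S11.uu θ (⇑φ) n ρ - S11.ww θ α β (⇑φ) n ρ)]
      refine h1.trans (le_of_eq ?_)
      have h1 : Integrable (fun ρ => 2*(S11.uu θ (⇑φ) n ρ)^2) (volume.restrict (Ioi 0)) :=
        (hu2int n).const_mul 2
      have h2 : Integrable (fun ρ => 2*(S11.ww θ α β (⇑φ) n ρ)^2) (volume.restrict (Ioi 0)) :=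
        (hw2int n).const_mul 2
      rw [integral_add h1 h2, MeasureTheory.integral_const_mul, MeasureTheory.integral_const_mul]
    have hEq : ∀ n, (∫ ρ in Set.Ioi (0:ℝ),
          (deriv (S11.xin θ (⇑φ) n) ρ + α * ρ⁻¹ * S11.xin θ (⇑φ) n ρ
            + β * ρ * S11.xin θ (⇑φ) n ρ
            - (deriv (fun x : ℝ => x ^ θ * φ x) ρ
              + α * ρ⁻¹ * (ρ ^ θ * φ ρ) + β * ρ * (ρ ^ θ * φ ρ))) ^ 2)
        = ∫ ρ in Ioi (0:ℝ), (S11.uu θ (⇑φ) n ρ + S11.ww θ α β (⇑φ) n ρ)^2 := by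
      intro n
      apply setIntegral_congr_fun measurableSet_Ioi
      intro ρ hρ
      have heE : S11.eta θ α β (⇑φ) ρ = deriv (fun x : ℝ => x ^ θ * φ x) ρ
          + α * ρ⁻¹ * (ρ ^ θ * φ ρ) + β * ρ * (ρ ^ θ * φ ρ) := rfl
      beta_reduce
      rw [← heE, hkey n ρ (mem_Ioi.mp hρ)]
    apply Tendsto.congr (fun n => (hEq n).symm)
    apply squeeze_zero (fun n => integral_nonneg fun ρ => sq_nonneg _) hbound
    have htot := (hIu.const_mul (2:ℝ)).add (hIw.const_mul (2:ℝ))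
    simpa using htot
end

section
/- For every ε > 0 there exist real numbers 0 < a < b and a smooth function f : (0,∞) → [0,1] such that f(ρ) = 1 for all ρ ≤ a, f(ρ) = 0 for all ρ ≥ b, and ∫₀^∞ f'(ρ)² ρ dρ < ε. -/
open MeasureTheory Set

lemma deriv_smoothTransition_zero_of_one_le {x : ℝ} (hx : 1 ≤ x) :
    deriv Real.smoothTransition x = 0 := by
  rcases eq_or_lt_of_le hx with h | h
  · subst h
    have : IsLocalMax Real.smoothTransition 1 := by
      refine Filter.Eventually.of_forall fun y => ?_
      rw [Real.smoothTransition.one]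
      exact Real.smoothTransition.le_one y
    exact this.deriv_eq_zero
  · have h1 : Real.smoothTransition =ᶠ[nhds x] fun _ => 1 := by
      filter_upwards [Ioi_mem_nhds h] with y hy
      exact Real.smoothTransition.one_of_one_le (le_of_lt hy)
    rw [h1.deriv_eq, deriv_const]

lemma deriv_smoothTransition_zero_of_nonpos {x : ℝ} (hx : x ≤ 0) :
    deriv Real.smoothTransition x = 0 := by
  rcases eq_or_lt_of_le hx with h | h
  · subst h
    have : IsLocalMin Real.smoothTransition 0 := by
      refine Filter.Eventually.of_forall fun y => ?_
      rw [Real.smoothTransition.zero]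
      exact Real.smoothTransition.nonneg y
    exact this.deriv_eq_zero
  · have h1 : Real.smoothTransition =ᶠ[nhds x] fun _ => 0 := by
      filter_upwards [Iio_mem_nhds h] with y hy
      exact Real.smoothTransition.zero_of_nonpos (le_of_lt hy)
    rw [h1.deriv_eq, deriv_const]

theorem statement12 (ε : ℝ) (hε : 0 < ε) :
    ∃ a b : ℝ, 0 < a ∧ a < b ∧
      ∃ f : ℝ → ℝ,
        ContDiffOn ℝ (⊤ : ℕ∞) f (Set.Ioi 0) ∧
        (∀ ρ ∈ Set.Ioi (0:ℝ), f ρ ∈ Set.Icc (0:ℝ) 1) ∧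
        (∀ ρ ∈ Set.Ioi (0:ℝ), ρ ≤ a → f ρ = 1) ∧
        (∀ ρ ∈ Set.Ioi (0:ℝ), b ≤ ρ → f ρ = 0) ∧
        (∫ ρ in Set.Ioi (0:ℝ), (deriv f ρ) ^ 2 * ρ) < ε := by
  -- bound on the derivative of the smooth transition function on [0,1]
  obtain ⟨M, hM⟩ := (isCompact_Icc (a := (0:ℝ)) (b := 1)).exists_bound_of_continuousOn
    (((Real.smoothTransition.contDiff (n := ⊤)).continuous_deriv (by exact_mod_cast le_top)).continuousOn)
  have hM0 : 0 ≤ M := le_trans (norm_nonneg _) (hM 0 ⟨le_refl _, zero_le_one⟩)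
  set L : ℝ := max 1 (M ^ 2 / ε + 1) with hLdef
  have hL1 : (1:ℝ) ≤ L := le_max_left _ _
  have hL0 : (0:ℝ) < L := lt_of_lt_of_le one_pos hL1
  set b : ℝ := Real.exp L with hbdef
  have hb1 : (1:ℝ) < b := by
    calc (1:ℝ) = Real.exp 0 := (Real.exp_zero).symm
    _ < Real.exp L := Real.exp_lt_exp.mpr hL0
  set u : ℝ → ℝ := fun ρ => 1 - Real.log ρ / L with hudef
  set f : ℝ → ℝ := fun ρ => Real.smoothTransition (u ρ) with hfdef
  -- derivative formula
  have hderiv : ∀ ρ ∈ Set.Ioi (0:ℝ),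
      HasDerivAt f (deriv Real.smoothTransition (u ρ) * (0 - ρ⁻¹ / L)) ρ := by
    intro ρ hρ
    have hu : HasDerivAt u (0 - ρ⁻¹ / L) ρ :=
      (hasDerivAt_const ρ (1:ℝ)).sub ((Real.hasDerivAt_log (ne_of_gt hρ)).div_const L)
    have hg : HasDerivAt Real.smoothTransition (deriv Real.smoothTransition (u ρ)) (u ρ) :=
      ((Real.smoothTransition.contDiff (n := ⊤)).differentiable (by simp) (u ρ)).hasDerivAt
    exact hg.comp ρ hu
  have hderiv' : ∀ ρ ∈ Set.Ioi (0:ℝ),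
      deriv f ρ = deriv Real.smoothTransition (u ρ) * (0 - ρ⁻¹ / L) := fun ρ hρ =>
    (hderiv ρ hρ).deriv
  refine ⟨1, b, one_pos, hb1, f, ?_, ?_, ?_, ?_, ?_⟩
  · -- smoothness
    apply (Real.smoothTransition.contDiff (n := ⊤)).comp_contDiffOn
    apply ContDiffOn.sub contDiffOn_const
    exact (Real.contDiffOn_log.mono (fun x hx => ne_of_gt hx)).div_const L
  · intro ρ _
    exact ⟨Real.smoothTransition.nonneg _, Real.smoothTransition.le_one _⟩
  · intro ρ hρ hρ1
    apply Real.smoothTransition.one_of_one_le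
    have hlog : Real.log ρ ≤ 0 := Real.log_nonpos (le_of_lt hρ) hρ1
    have hq : Real.log ρ / L ≤ 0 := div_nonpos_of_nonpos_of_nonneg hlog hL0.le
    simp only [hudef]
    linarith
  · intro ρ hρ hρb
    apply Real.smoothTransition.zero_of_nonpos
    have : L ≤ Real.log ρ := by
      rw [hbdef] at hρb
      calc L = Real.log (Real.exp L) := (Real.log_exp L).symm
      _ ≤ Real.log ρ := Real.log_le_log (Real.exp_pos L) hρb
    simp only [hudef]
    rw [sub_nonpos, le_div_iff₀ hL0]
    linarith
  · -- the integral bound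
    have hIoc : Set.Ioc (1:ℝ) b ⊆ Set.Ioi 0 := fun x hx => lt_trans one_pos hx.1
    -- the integrand vanishes on Ioi 0 \ Ioc 1 b
    have hvanish : ∀ ρ ∈ Set.Ioi (0:ℝ) \ Set.Ioc 1 b, (deriv f ρ) ^ 2 * ρ = 0 := by
      rintro ρ ⟨hρ, hρ'⟩
      rw [hderiv' ρ hρ]
      have : deriv Real.smoothTransition (u ρ) = 0 := by
        rcases not_and_or.mp hρ' with h | h
        · push_neg at h
          apply deriv_smoothTransition_zero_of_one_le
          have hlog : Real.log ρ ≤ 0 := Real.log_nonpos (le_of_lt hρ) h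
          have hq : Real.log ρ / L ≤ 0 := div_nonpos_of_nonpos_of_nonneg hlog hL0.le
          simp only [hudef]
          linarith
        · push_neg at h
          apply deriv_smoothTransition_zero_of_nonpos
          have : L ≤ Real.log ρ := by
            calc L = Real.log (Real.exp L) := (Real.log_exp L).symm
            _ ≤ Real.log ρ := Real.log_le_log (Real.exp_pos L) h.le
          simp only [hudef]
          rw [sub_nonpos, le_div_iff₀ hL0]
          linarith
      rw [this]; ring
    have hred : (∫ ρ in Set.Ioi (0:ℝ), (deriv f ρ) ^ 2 * ρ)
        = ∫ ρ in Set.Ioc (1:ℝ) b, (deriv f ρ) ^ 2 * ρ := by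
      apply setIntegral_eq_of_subset_of_ae_diff_eq_zero measurableSet_Ioi.nullMeasurableSet hIoc
      exact Filter.Eventually.of_forall (fun x hx => hvanish x hx)
    rw [hred]
    -- explicit continuous formula for the integrand on Ioi 0
    set F : ℝ → ℝ := fun ρ => (deriv Real.smoothTransition (u ρ) * (0 - ρ⁻¹ / L)) ^ 2 * ρ
      with hFdef
    have hcongr : ∀ ρ ∈ Set.Ioc (1:ℝ) b, (deriv f ρ) ^ 2 * ρ = F ρ := by
      intro ρ hρ
      rw [hderiv' ρ (hIoc hρ)]
    rw [setIntegral_congr_fun measurableSet_Ioc hcongr]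
    -- continuity of F on Ioi 0
    have hFcont : ContinuousOn F (Set.Ioi 0) := by
      apply ContinuousOn.mul ?_ continuousOn_id
      apply ContinuousOn.pow
      apply ContinuousOn.mul
      · apply ((Real.smoothTransition.contDiff (n := ⊤)).continuous_deriv (by exact_mod_cast le_top)).comp_continuousOn
        exact (continuousOn_const.sub
          ((Real.continuousOn_log.mono (fun x hx => ne_of_gt hx)).div_const L))
      · exact continuousOn_const.sub
          ((continuousOn_inv₀.mono (fun x hx => ne_of_gt hx)).div_const L)
    have hFint : IntegrableOn F (Set.Ioc 1 b) := by
      apply IntegrableOn.mono_set ?_ Set.Ioc_subset_Icc_self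
      exact (hFcont.mono (fun x hx => lt_of_lt_of_le one_pos hx.1)).integrableOn_Icc
    have hGint : IntegrableOn (fun ρ => M ^ 2 / L ^ 2 * ρ⁻¹) (Set.Ioc 1 b) := by
      apply IntegrableOn.mono_set ?_ Set.Ioc_subset_Icc_self
      apply ContinuousOn.integrableOn_Icc
      exact continuousOn_const.mul
        (continuousOn_inv₀.mono (fun x hx => ne_of_gt (lt_of_lt_of_le one_pos hx.1)))
    have hbound : ∀ ρ ∈ Set.Ioc (1:ℝ) b, F ρ ≤ M ^ 2 / L ^ 2 * ρ⁻¹ := by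
      intro ρ hρ
      have hρ0 : (0:ℝ) < ρ := lt_trans one_pos hρ.1
      have hu01 : u ρ ∈ Set.Icc (0:ℝ) 1 := by
        constructor
        · have : Real.log ρ ≤ L := by
            calc Real.log ρ ≤ Real.log b := Real.log_le_log hρ0 hρ.2
            _ = L := Real.log_exp L
          simp only [hudef]
          rw [sub_nonneg, div_le_one hL0]
          exact this
        · have : 0 ≤ Real.log ρ := Real.log_nonneg (le_of_lt hρ.1)
          simp only [hudef]
          nlinarith [div_nonneg this (le_of_lt hL0)]
      have hd : |deriv Real.smoothTransition (u ρ)| ≤ M := hM _ hu01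
      have hd2 : (deriv Real.smoothTransition (u ρ)) ^ 2 ≤ M ^ 2 := by
        nlinarith [abs_nonneg (deriv Real.smoothTransition (u ρ)),
          sq_abs (deriv Real.smoothTransition (u ρ))]
      simp only [hFdef]
      have : (deriv Real.smoothTransition (u ρ) * (0 - ρ⁻¹ / L)) ^ 2 * ρ
          = (deriv Real.smoothTransition (u ρ)) ^ 2 * (ρ⁻¹ / L ^ 2) := by
        field_simp
        ring
      rw [this]
      have h2 : M ^ 2 / L ^ 2 * ρ⁻¹ = M ^ 2 * (ρ⁻¹ / L ^ 2) := by ring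
      rw [h2]
      exact mul_le_mul_of_nonneg_right hd2 (by positivity)
    have hstep : (∫ ρ in Set.Ioc (1:ℝ) b, F ρ)
        ≤ ∫ ρ in Set.Ioc (1:ℝ) b, M ^ 2 / L ^ 2 * ρ⁻¹ :=
      setIntegral_mono_on hFint hGint measurableSet_Ioc hbound
    have hval : (∫ ρ in Set.Ioc (1:ℝ) b, M ^ 2 / L ^ 2 * ρ⁻¹) = M ^ 2 / L := by
      rw [MeasureTheory.integral_const_mul]
      have : (∫ ρ in Set.Ioc (1:ℝ) b, ρ⁻¹) = ∫ ρ in (1:ℝ)..b, ρ⁻¹ := by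
        rw [intervalIntegral.integral_of_le (le_of_lt hb1)]
      rw [this, integral_inv_of_pos one_pos (lt_trans one_pos hb1), div_one, hbdef,
        Real.log_exp]
      field_simp
    have hfin : M ^ 2 / L < ε := by
      rw [div_lt_iff₀ hL0]
      have h1 : M ^ 2 / ε + 1 ≤ L := le_max_right _ _
      have h2 : ε * (M ^ 2 / ε + 1) = M ^ 2 + ε := by field_simp
      nlinarith [mul_le_mul_of_nonneg_left h1 hε.le]
    calc (∫ ρ in Set.Ioc (1:ℝ) b, F ρ) ≤ _ := hstep
    _ = M ^ 2 / L := hval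
    _ < ε := hfin
end

section
/- Let κ, s ∈ ℝ with s > 0 and |κ| < 1/2, and let ε ∈ {1,−1}. Then there exist u, w ∈ L²((0,∞)) satisfying ∫₀^∞ u(ρ)·(−φ'(ρ) − κρ^{−1}φ(ρ) + εsρ φ(ρ)) dρ = ∫₀^∞ w(ρ)φ(ρ) dρ for every φ ∈ C_c^∞((0,∞)), such that there is NO sequence (u_n) in C_c^∞((0,∞)) with u_n → u in L²((0,∞)) and u_n' − κρ^{−1}u_n + εsρ u_n → w in L²((0,∞)). (That is, the minimal and maximal closed extensions of the operator d u = u' − κρ^{−1}u + εsρ u with initial domain C_c^∞((0,∞)) differ.) -/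
open MeasureTheory Set Filter

namespace Stmt14

lemma deriv_zero_of_eventually_const {f : ℝ → ℝ} {c : ℝ} {x : ℝ}
    (h : f =ᶠ[nhds x] fun _ => c) : deriv f x = 0 := by
  rw [h.deriv_eq]; exact deriv_const x c

lemma test_bounds {φ : ℝ → ℝ} (hφ : IsTestOnIoi φ) :
    ∃ a b : ℝ, 0 < a ∧ a ≤ b ∧ ∀ x, x ∉ Set.Icc a b → φ x = 0 := by
  obtain ⟨-, hc, hsub⟩ := hφ
  by_cases hne : (tsupport φ).Nonempty
  · refine ⟨sInf (tsupport φ), sSup (tsupport φ), hsub (hc.sInf_mem hne), ?_, ?_⟩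
    · exact csInf_le_csSup hne hc.bddBelow hc.bddAbove
    · intro x hx
      by_contra h0
      have hxm : x ∈ tsupport φ := subset_tsupport φ h0
      exact hx ⟨csInf_le hc.bddBelow hxm, le_csSup hc.bddAbove hxm⟩
  · refine ⟨1, 1, one_pos, le_refl _, fun x _ => ?_⟩
    apply image_eq_zero_of_notMem_tsupport
    intro hx; exact hne ⟨x, hx⟩

lemma deriv_zero_outside {φ : ℝ → ℝ} {a b : ℝ}
    (h0 : ∀ y, y ∉ Set.Icc a b → φ y = 0) {x : ℝ} (hx : x < a ∨ b < x) : deriv φ x = 0 := by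
  apply deriv_zero_of_eventually_const (c := 0)
  have hU : IsOpen (Set.Iio a ∪ Set.Ioi b) := isOpen_Iio.union isOpen_Ioi
  have hxU : x ∈ Set.Iio a ∪ Set.Ioi b := by
    rcases hx with h | h
    · exact Or.inl h
    · exact Or.inr h
  filter_upwards [hU.mem_nhds hxU] with y hy
  apply h0
  intro hyIcc
  rcases hy with h | h
  · exact absurd hyIcc.1 (not_le.2 h)
  · exact absurd hyIcc.2 (not_le.2 h)

lemma key_ftc (F F' : ℝ → ℝ) (c d : ℝ) (hc : 0 < c) (hcd : c ≤ d)
    (hF : ∀ x ∈ Set.Icc c d, HasDerivAt F (F' x) x)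
    (hF' : ContinuousOn F' (Set.Icc c d))
    (hvan : ∀ x, 0 < x → x ∉ Set.Ioc c d → F' x = 0) :
    IntegrableOn F' (Set.Ioi 0) volume ∧ ∫ x in Set.Ioi (0:ℝ), F' x = F d - F c := by
  have hsub : Set.Ioc c d ⊆ Set.Ioi (0:ℝ) := fun x hx => lt_trans hc hx.1
  have hIntIoc : IntegrableOn F' (Set.Ioc c d) volume :=
    (hF'.integrableOn_Icc).mono_set Set.Ioc_subset_Icc_self
  have hEq : Set.EqOn ((Set.Ioc c d).indicator F') F' (Set.Ioi 0) := by
    intro x hx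
    by_cases hm : x ∈ Set.Ioc c d
    · simp [Set.indicator_of_mem hm]
    · simp [Set.indicator_of_notMem hm, hvan x hx hm]
  have hIndInt : IntegrableOn ((Set.Ioc c d).indicator F') (Set.Ioi 0) volume :=
    ((integrable_indicator_iff measurableSet_Ioc).2 hIntIoc).integrableOn
  constructor
  · exact hIndInt.congr_fun hEq measurableSet_Ioi
  · have h1 : ∫ x in Set.Ioi (0:ℝ), F' x = ∫ x in Set.Ioi (0:ℝ), (Set.Ioc c d).indicator F' x :=
      (setIntegral_congr_fun measurableSet_Ioi hEq).symm
    rw [h1, setIntegral_indicator measurableSet_Ioc,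
      Set.inter_eq_self_of_subset_right hsub, ← intervalIntegral.integral_of_le hcd]
    apply intervalIntegral.integral_eq_sub_of_hasDerivAt
    · intro x hx
      exact hF x (by rwa [Set.uIcc_of_le hcd] at hx)
    · exact (hF'.mono (by rw [Set.uIcc_of_le hcd])).intervalIntegrable

lemma memL2 (c : ℝ) (hc : -1 < 2 * c) (h : ℝ → ℝ) (hh : Continuous h)
    (hsupp : ∀ ρ : ℝ, 2 < ρ → h ρ = 0) :
    MemLp (fun ρ => ρ ^ c * h ρ) 2 (volume.restrict (Set.Ioi 0)) := by
  have hcontOn : ∀ s : Set ℝ, (∀ x ∈ s, x ≠ 0) → ContinuousOn (fun ρ : ℝ => ρ ^ c * h ρ) s := by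
    intro s hs x hx
    exact ((Real.continuousAt_rpow_const x c (Or.inl (hs x hx))).mul
      hh.continuousAt).continuousWithinAt
  have hmeas : AEStronglyMeasurable (fun ρ : ℝ => ρ ^ c * h ρ) (volume.restrict (Set.Ioi 0)) :=
    (hcontOn _ (fun x hx => ne_of_gt hx)).aestronglyMeasurable measurableSet_Ioi
  rw [memLp_two_iff_integrable_sq hmeas]
  have hsplit : Set.Ioi (0:ℝ) = Set.Ioc 0 2 ∪ Set.Ioi 2 :=
    (Set.Ioc_union_Ioi_eq_Ioi (by norm_num)).symm
  have hIoi : IntegrableOn (fun ρ : ℝ => (ρ ^ c * h ρ) ^ 2) (Set.Ioi 2) volume := by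
    apply (integrableOn_zero (s := Set.Ioi (2:ℝ))).congr_fun _ measurableSet_Ioi
    intro x hx
    simp [hsupp x hx]
  have hIoc : IntegrableOn (fun ρ : ℝ => (ρ ^ c * h ρ) ^ 2) (Set.Ioc 0 2) volume := by
    obtain ⟨M, hM⟩ := isCompact_Icc.exists_bound_of_continuousOn
      (hh.continuousOn : ContinuousOn h (Set.Icc (0:ℝ) 2))
    have hBint : IntegrableOn (fun x : ℝ => M ^ 2 * x ^ (2 * c)) (Set.Ioc 0 2) volume := by
      have := intervalIntegral.intervalIntegrable_rpow' (a := 0) (b := 2) hc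
      rw [intervalIntegrable_iff, Set.uIoc_of_le (by norm_num : (0:ℝ) ≤ 2)] at this
      exact this.const_mul _
    apply Integrable.mono' hBint
    · exact ((hcontOn _ (fun x hx => ne_of_gt hx.1)).pow 2).aestronglyMeasurable measurableSet_Ioc
    · rw [ae_restrict_iff' measurableSet_Ioc]
      apply ae_of_all
      intro x hx
      have hx0 : (0:ℝ) < x := hx.1
      have h2 : x ^ (2 * c) = (x ^ c) ^ 2 := by
        rw [sq, ← Real.rpow_add hx0]; ring_nf
      have hMx : |h x| ≤ M := by
        have := hM x ⟨hx0.le, hx.2⟩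
        rwa [Real.norm_eq_abs] at this
      have hMnn : (0:ℝ) ≤ M := le_trans (abs_nonneg _) hMx
      rw [Real.norm_eq_abs, abs_of_nonneg (sq_nonneg _), h2]
      have hsq : (h x) ^ 2 ≤ M ^ 2 := by nlinarith [sq_abs (h x), abs_nonneg (h x)]
      nlinarith [sq_nonneg (x ^ c), sq_nonneg (h x)]
  rw [show (Integrable (fun ρ : ℝ => (ρ ^ c * h ρ) ^ 2) (volume.restrict (Set.Ioi 0))) =
      IntegrableOn (fun ρ : ℝ => (ρ ^ c * h ρ) ^ 2) (Set.Ioi 0) volume from rfl, hsplit]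
  exact hIoc.union hIoi

lemma int_mul {μ : Measure ℝ} {f g : ℝ → ℝ} (hf : MemLp f 2 μ) (hg : MemLp g 2 μ) :
    Integrable (fun x => f x * g x) μ := by
  refine Integrable.mono' ((hf.integrable_sq.add hg.integrable_sq).const_mul (1/2))
    (hf.1.mul hg.1) (ae_of_all _ fun x => ?_)
  rw [Real.norm_eq_abs, abs_mul]
  simp only [Pi.add_apply, smul_eq_mul]
  nlinarith [sq_nonneg (|f x| - |g x|), sq_abs (f x), sq_abs (g x), abs_nonneg (f x),
    abs_nonneg (g x)]

lemma tendsto_integral_mul_zero {μ : Measure ℝ} {f : ℕ → ℝ → ℝ} {g : ℝ → ℝ}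
    (hf : ∀ n, MemLp (f n) 2 μ) (hg : MemLp g 2 μ)
    (h0 : Tendsto (fun n => ∫ x, (f n x) ^ 2 ∂μ) atTop (nhds 0)) :
    Tendsto (fun n => ∫ x, f n x * g x ∂μ) atTop (nhds 0) := by
  have h2 : (2:ℝ).HolderConjugate 2 := Real.HolderConjugate.two_two
  have hof : ENNReal.ofReal (2:ℝ) = 2 := by norm_num
  have hpow : ∀ u : ℝ → ℝ, (fun x => ‖u x‖ ^ (2:ℝ)) = fun x => (u x) ^ 2 := by
    intro u; funext x
    rw [show (2:ℝ) = ((2:ℕ):ℝ) by norm_num, Real.rpow_natCast, Real.norm_eq_abs, sq_abs]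
  set C := (∫ x, (g x) ^ 2 ∂μ) ^ (1/2 : ℝ) with hC
  have hbound : ∀ n, ‖∫ x, f n x * g x ∂μ‖ ≤ (∫ x, (f n x) ^ 2 ∂μ) ^ (1/2:ℝ) * C := by
    intro n
    calc ‖∫ x, f n x * g x ∂μ‖ ≤ ∫ x, ‖f n x * g x‖ ∂μ := norm_integral_le_integral_norm _
      _ = ∫ x, ‖f n x‖ * ‖g x‖ ∂μ := by simp only [norm_mul]
      _ ≤ (∫ x, ‖f n x‖ ^ (2:ℝ) ∂μ) ^ (1/2:ℝ) * (∫ x, ‖g x‖ ^ (2:ℝ) ∂μ) ^ (1/2:ℝ) :=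
          integral_mul_norm_le_Lp_mul_Lq h2 (hof ▸ hf n) (hof ▸ hg)
      _ = (∫ x, (f n x) ^ 2 ∂μ) ^ (1/2:ℝ) * C := by rw [hpow, hpow]
  apply squeeze_zero_norm hbound
  have hcont : ContinuousAt (fun y : ℝ => y ^ (1/2:ℝ)) 0 :=
    Real.continuousAt_rpow_const 0 (1/2) (Or.inr (by norm_num))
  have h3 : Tendsto (fun n => (∫ x, (f n x) ^ 2 ∂μ) ^ (1/2:ℝ)) atTop (nhds 0) := by
    have := hcont.tendsto.comp h0
    rwa [Real.zero_rpow (by norm_num : (1/2:ℝ) ≠ 0)] at this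
  simpa using h3.mul_const C

lemma memL2_dtest (κ s ε : ℝ) {φ : ℝ → ℝ} (hφ : IsTestOnIoi φ) :
    MemLp (fun ρ => deriv φ ρ - κ * ρ⁻¹ * φ ρ + ε * s * ρ * φ ρ) 2
      (volume.restrict (Set.Ioi 0)) := by
  obtain ⟨a, b, ha, hab, hz⟩ := test_bounds hφ
  have hφc : Continuous φ := hφ.1.continuous
  have hφdc : Continuous (deriv φ) := hφ.1.continuous_deriv (by exact_mod_cast le_top)
  have hinv : Continuous (fun ρ : ℝ => κ * ρ⁻¹ * φ ρ) := by
    rw [continuous_iff_continuousAt]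
    intro x
    by_cases hx : x = 0
    · subst hx
      have hev : (fun ρ : ℝ => κ * ρ⁻¹ * φ ρ) =ᶠ[nhds 0] (fun _ => 0) := by
        filter_upwards [isOpen_Iio.mem_nhds (show (0:ℝ) ∈ Set.Iio a from ha)] with y hy
        have : φ y = 0 := hz y (fun hyIcc => absurd hyIcc.1 (not_le.2 hy))
        simp [this]
      exact (continuousAt_congr hev).2 continuousAt_const
    · exact (continuousAt_const.mul (continuousAt_id.inv₀ hx)).mul hφc.continuousAt
  have hcont : Continuous (fun ρ : ℝ => deriv φ ρ - κ * ρ⁻¹ * φ ρ + ε * s * ρ * φ ρ) := by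
    apply Continuous.add (hφdc.sub hinv)
    exact (continuous_const.mul continuous_id).mul hφc
  have hsupp : HasCompactSupport (fun ρ : ℝ => deriv φ ρ - κ * ρ⁻¹ * φ ρ + ε * s * ρ * φ ρ) := by
    apply HasCompactSupport.intro (isCompact_Icc (a := a) (b := b))
    intro x hx
    have hxor : x < a ∨ b < x := by
      by_contra hcon
      push_neg at hcon
      exact hx ⟨hcon.1, hcon.2⟩
    simp [hz x hx, deriv_zero_outside hz hxor]
  exact (hcont.memLp_of_hasCompactSupport hsupp).restrict _

end Stmt14

open Stmt14 in
/-- For `|κ| < 1/2`, `s > 0`, `ε = ±1`, the minimal and maximal closed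
extensions of `d u = u' - κρ⁻¹u + εsρu` with initial domain `C_c^∞((0,∞))` differ: there are
`u, w ∈ L²((0,∞))` satisfying the weak equation `∫ u·δφ = ∫ w·φ` for all test functions `φ`,
such that no sequence of test functions `uₙ` satisfies `uₙ → u` and `d uₙ → w` in `L²`. -/
theorem statement14 (κ s ε : ℝ) (hs : 0 < s) (hκ : |κ| < 1/2) (hε : ε = 1 ∨ ε = -1) :
    ∃ u w : ℝ → ℝ,
      MemLp u 2 (volume.restrict (Set.Ioi 0)) ∧
      MemLp w 2 (volume.restrict (Set.Ioi 0)) ∧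
      (∀ φ : ℝ → ℝ, IsTestOnIoi φ →
        ∫ ρ in Set.Ioi (0:ℝ),
            u ρ * (-(deriv φ ρ) - κ * ρ⁻¹ * φ ρ + ε * s * ρ * φ ρ) =
        ∫ ρ in Set.Ioi (0:ℝ), w ρ * φ ρ) ∧
      ¬ ∃ un : ℕ → ℝ → ℝ, (∀ n, IsTestOnIoi (un n)) ∧
        Tendsto (fun n => ∫ ρ in Set.Ioi (0:ℝ), (un n ρ - u ρ) ^ 2) atTop (nhds 0) ∧
        Tendsto (fun n => ∫ ρ in Set.Ioi (0:ℝ),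
            (deriv (un n) ρ - κ * ρ⁻¹ * un n ρ + ε * s * ρ * un n ρ - w ρ) ^ 2)
          atTop (nhds 0) := by
  obtain ⟨hκ1, hκ2⟩ := abs_lt.1 hκ
  set B : ContDiffBump (0:ℝ) := ⟨1, 2, one_pos, one_lt_two⟩ with hBdef
  set χ : ℝ → ℝ := fun x => B x with hχdef
  have hχsm : ContDiff ℝ (⊤ : ℕ∞) χ := B.contDiff
  have hχdiff : Differentiable ℝ χ := hχsm.differentiable (by simp)
  have hχc : Continuous χ := hχsm.continuous
  have hχdc : Continuous (deriv χ) := hχsm.continuous_deriv (by exact_mod_cast le_top)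
  have hχ1 : ∀ x : ℝ, |x| ≤ 1 → χ x = 1 := by
    intro x hx
    exact B.one_of_mem_closedBall (by simpa [Real.dist_eq] using hx)
  have hχ0 : ∀ x : ℝ, 2 ≤ |x| → χ x = 0 := by
    intro x hx
    exact B.zero_of_le_dist (by simpa [Real.dist_eq] using hx)
  have hχd1 : ∀ x : ℝ, |x| < 1 → deriv χ x = 0 := by
    intro x hx
    apply deriv_zero_of_eventually_const (c := 1)
    obtain ⟨hx1, hx2⟩ := abs_lt.1 hx
    filter_upwards [isOpen_Ioo.mem_nhds (show x ∈ Set.Ioo (-1:ℝ) 1 from ⟨hx1, hx2⟩)] with y hy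
    exact hχ1 y (abs_le.2 ⟨hy.1.le, hy.2.le⟩)
  have hχd2 : ∀ x : ℝ, 2 < x → deriv χ x = 0 := by
    intro x hx
    apply deriv_zero_of_eventually_const (c := 0)
    filter_upwards [isOpen_Ioi.mem_nhds (show x ∈ Set.Ioi (2:ℝ) from hx)] with y hy
    exact hχ0 y (by rw [abs_of_pos (by linarith [Set.mem_Ioi.1 hy])]; exact (Set.mem_Ioi.1 hy).le)
  -- the functions u, w, v, g
  refine ⟨fun ρ => ρ ^ κ * χ ρ, fun ρ => ρ ^ κ * (deriv χ ρ + ε * s * ρ * χ ρ), ?_, ?_, ?_, ?_⟩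
  · exact memL2 κ (by linarith) χ hχc
      (fun ρ hρ => hχ0 ρ (by rw [abs_of_pos (by linarith)]; linarith))
  · apply memL2 κ (by linarith)
    · exact hχdc.add ((continuous_const.mul continuous_id).mul hχc)
    · intro ρ hρ
      have h1 : χ ρ = 0 := hχ0 ρ (by rw [abs_of_pos (by linarith)]; linarith)
      simp [hχd2 ρ hρ, h1]
  · -- weak equation
    intro φ hφ
    obtain ⟨a, b, ha, hab, hz⟩ := test_bounds hφ
    have hφd : Differentiable ℝ φ := hφ.1.differentiable (by simp)
    have hφc : Continuous φ := hφ.1.continuous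
    have hφdc : Continuous (deriv φ) := hφ.1.continuous_deriv (by exact_mod_cast le_top)
    have hφL2 : MemLp φ 2 (volume.restrict (Set.Ioi 0)) :=
      (hφc.memLp_of_hasCompactSupport hφ.2.1).restrict _
    have hwL2 : MemLp (fun ρ : ℝ => ρ ^ κ * (deriv χ ρ + ε * s * ρ * χ ρ)) 2
        (volume.restrict (Set.Ioi 0)) := by
      apply memL2 κ (by linarith)
      · exact hχdc.add ((continuous_const.mul continuous_id).mul hχc)
      · intro ρ hρ
        have h1 : χ ρ = 0 := hχ0 ρ (by rw [abs_of_pos (by linarith)]; linarith)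
        simp [hχd2 ρ hρ, h1]
    have hc0 : (0:ℝ) < a/2 := by linarith
    obtain ⟨hIntF', hEval⟩ := key_ftc (fun x => (x ^ κ * χ x) * φ x)
        (fun x => (κ * x ^ (κ-1) * χ x + x ^ κ * deriv χ x) * φ x + (x ^ κ * χ x) * deriv φ x)
        (a/2) (b+1) hc0 (by linarith)
        (by
          intro x hx
          have hx0 : x ≠ 0 := ne_of_gt (lt_of_lt_of_le hc0 hx.1)
          have h1 : HasDerivAt (fun y : ℝ => y ^ κ) (κ * x ^ (κ-1)) x :=
            Real.hasDerivAt_rpow_const (Or.inl hx0)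
          exact (h1.mul (hχdiff x).hasDerivAt).mul (hφd x).hasDerivAt)
        (by
          have hrp : ∀ p : ℝ, ContinuousOn (fun x : ℝ => x ^ p) (Set.Icc (a/2) (b+1)) :=
            fun p x hx => (Real.continuousAt_rpow_const x p
              (Or.inl (ne_of_gt (lt_of_lt_of_le hc0 hx.1)))).continuousWithinAt
          exact ((((continuousOn_const.mul (hrp (κ-1))).mul hχc.continuousOn).add
            ((hrp κ).mul hχdc.continuousOn)).mul hφc.continuousOn).add
            (((hrp κ).mul hχc.continuousOn).mul hφdc.continuousOn))
        (by
          intro x hx hxn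
          have hxo : x ≤ a/2 ∨ b+1 < x := by
            by_contra hcon
            push_neg at hcon
            exact hxn ⟨hcon.1, hcon.2⟩
          have hxor : x < a ∨ b < x := by
            rcases hxo with h | h
            · exact Or.inl (by linarith)
            · exact Or.inr (by linarith)
          have hφ0 : φ x = 0 := hz x (fun hIcc => by
            rcases hxor with h | h
            · exact absurd hIcc.1 (not_le.2 h)
            · exact absurd hIcc.2 (not_le.2 h))
          have hdφ0 : deriv φ x = 0 := deriv_zero_outside hz hxor
          simp [hφ0, hdφ0])
    have hF'eval : ∫ x in Set.Ioi (0:ℝ),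
        ((κ * x ^ (κ-1) * χ x + x ^ κ * deriv χ x) * φ x + (x ^ κ * χ x) * deriv φ x) = 0 := by
      rw [hEval]
      have h1 : φ (b+1) = 0 := hz _ (fun hIcc => by linarith [hIcc.2])
      have h2 : φ (a/2) = 0 := hz _ (fun hIcc => by linarith [hIcc.1])
      simp [h1, h2]
    have hEqOn : Set.EqOn
        (fun ρ => (ρ ^ κ * χ ρ) * (-(deriv φ ρ) - κ * ρ⁻¹ * φ ρ + ε * s * ρ * φ ρ))
        (fun ρ => (ρ ^ κ * (deriv χ ρ + ε * s * ρ * χ ρ)) * φ ρ -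
          ((κ * ρ ^ (κ-1) * χ ρ + ρ ^ κ * deriv χ ρ) * φ ρ + (ρ ^ κ * χ ρ) * deriv φ ρ))
        (Set.Ioi 0) := by
      intro ρ hρ
      have hρ0 : (0:ℝ) < ρ := hρ
      have hr1 : ρ ^ (κ - 1) = ρ ^ κ / ρ := by rw [Real.rpow_sub hρ0, Real.rpow_one]
      simp only [hr1]
      field_simp
      ring
    rw [setIntegral_congr_fun measurableSet_Ioi hEqOn,
      integral_sub (int_mul hwL2 hφL2) hIntF', hF'eval, sub_zero]
  · -- no approximating sequence
    rintro ⟨un, hun, h1, h2⟩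
    have hvL2 : MemLp (fun ρ : ℝ => ρ ^ (-κ) * χ ρ) 2 (volume.restrict (Set.Ioi 0)) :=
      memL2 (-κ) (by linarith) χ hχc
        (fun ρ hρ => hχ0 ρ (by rw [abs_of_pos (by linarith)]; linarith))
    have hgL2 : MemLp (fun ρ : ℝ => ρ ^ (-κ) * (-(deriv χ ρ) + ε * s * ρ * χ ρ)) 2
        (volume.restrict (Set.Ioi 0)) := by
      apply memL2 (-κ) (by linarith)
      · exact hχdc.neg.add ((continuous_const.mul continuous_id).mul hχc)
      · intro ρ hρ
        have hc : χ ρ = 0 := hχ0 ρ (by rw [abs_of_pos (by linarith)]; linarith)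
        simp [hχd2 ρ hρ, hc]
    have huL2 : MemLp (fun ρ : ℝ => ρ ^ κ * χ ρ) 2 (volume.restrict (Set.Ioi 0)) :=
      memL2 κ (by linarith) χ hχc
        (fun ρ hρ => hχ0 ρ (by rw [abs_of_pos (by linarith)]; linarith))
    have hwL2 : MemLp (fun ρ : ℝ => ρ ^ κ * (deriv χ ρ + ε * s * ρ * χ ρ)) 2
        (volume.restrict (Set.Ioi 0)) := by
      apply memL2 κ (by linarith)
      · exact hχdc.add ((continuous_const.mul continuous_id).mul hχc)
      · intro ρ hρ
        have hc : χ ρ = 0 := hχ0 ρ (by rw [abs_of_pos (by linarith)]; linarith)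
        simp [hχd2 ρ hρ, hc]
    have hunL2 : ∀ n, MemLp (un n) 2 (volume.restrict (Set.Ioi 0)) := fun n =>
      ((hun n).1.continuous.memLp_of_hasCompactSupport (hun n).2.1).restrict _
    have hdL2 : ∀ n, MemLp (fun ρ => deriv (un n) ρ - κ * ρ⁻¹ * un n ρ + ε * s * ρ * un n ρ) 2
        (volume.restrict (Set.Ioi 0)) := fun n => memL2_dtest κ s ε (hun n)
    -- integration by parts against v, for each test function
    have hIBP : ∀ φ : ℝ → ℝ, IsTestOnIoi φ →
        ∫ ρ in Set.Ioi (0:ℝ), (deriv φ ρ - κ * ρ⁻¹ * φ ρ + ε * s * ρ * φ ρ) * (ρ ^ (-κ) * χ ρ) =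
        ∫ ρ in Set.Ioi (0:ℝ), φ ρ * (ρ ^ (-κ) * (-(deriv χ ρ) + ε * s * ρ * χ ρ)) := by
      intro φ hφ
      obtain ⟨a, b, ha, hab, hz⟩ := test_bounds hφ
      have hφd : Differentiable ℝ φ := hφ.1.differentiable (by simp)
      have hφc : Continuous φ := hφ.1.continuous
      have hφdc : Continuous (deriv φ) := hφ.1.continuous_deriv (by exact_mod_cast le_top)
      have hφL2 : MemLp φ 2 (volume.restrict (Set.Ioi 0)) :=
        (hφc.memLp_of_hasCompactSupport hφ.2.1).restrict _
      have hc0 : (0:ℝ) < a/2 := by linarith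
      obtain ⟨hIntF', hEval⟩ := key_ftc (fun x => φ x * (x ^ (-κ) * χ x))
          (fun x => deriv φ x * (x ^ (-κ) * χ x) +
            φ x * ((-κ) * x ^ (-κ-1) * χ x + x ^ (-κ) * deriv χ x))
          (a/2) (b+1) hc0 (by linarith)
          (by
            intro x hx
            have hx0 : x ≠ 0 := ne_of_gt (lt_of_lt_of_le hc0 hx.1)
            have h1 : HasDerivAt (fun y : ℝ => y ^ (-κ)) ((-κ) * x ^ (-κ-1)) x :=
              Real.hasDerivAt_rpow_const (Or.inl hx0)
            exact (hφd x).hasDerivAt.mul (h1.mul (hχdiff x).hasDerivAt))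
          (by
            have hrp : ∀ p : ℝ, ContinuousOn (fun x : ℝ => x ^ p) (Set.Icc (a/2) (b+1)) :=
              fun p x hx => (Real.continuousAt_rpow_const x p
                (Or.inl (ne_of_gt (lt_of_lt_of_le hc0 hx.1)))).continuousWithinAt
            exact (hφdc.continuousOn.mul ((hrp (-κ)).mul hχc.continuousOn)).add
              (hφc.continuousOn.mul (((continuousOn_const.mul (hrp (-κ-1))).mul
                hχc.continuousOn).add ((hrp (-κ)).mul hχdc.continuousOn))))
          (by
            intro x hx hxn
            have hxo : x ≤ a/2 ∨ b+1 < x := by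
              by_contra hcon
              push_neg at hcon
              exact hxn ⟨hcon.1, hcon.2⟩
            have hxor : x < a ∨ b < x := by
              rcases hxo with h | h
              · exact Or.inl (by linarith)
              · exact Or.inr (by linarith)
            have hφ0 : φ x = 0 := hz x (fun hIcc => by
              rcases hxor with h | h
              · exact absurd hIcc.1 (not_le.2 h)
              · exact absurd hIcc.2 (not_le.2 h))
            have hdφ0 : deriv φ x = 0 := deriv_zero_outside hz hxor
            simp [hφ0, hdφ0])
      have hF'eval : ∫ x in Set.Ioi (0:ℝ), (deriv φ x * (x ^ (-κ) * χ x) +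
          φ x * ((-κ) * x ^ (-κ-1) * χ x + x ^ (-κ) * deriv χ x)) = 0 := by
        rw [hEval]
        have hb1 : φ (b+1) = 0 := hz _ (fun hIcc => by linarith [hIcc.2])
        have ha2 : φ (a/2) = 0 := hz _ (fun hIcc => by linarith [hIcc.1])
        simp [hb1, ha2]
      have hEqOn : Set.EqOn
          (fun ρ => (deriv φ ρ - κ * ρ⁻¹ * φ ρ + ε * s * ρ * φ ρ) * (ρ ^ (-κ) * χ ρ))
          (fun ρ => φ ρ * (ρ ^ (-κ) * (-(deriv χ ρ) + ε * s * ρ * χ ρ)) +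
            (deriv φ ρ * (ρ ^ (-κ) * χ ρ) +
              φ ρ * ((-κ) * ρ ^ (-κ-1) * χ ρ + ρ ^ (-κ) * deriv χ ρ)))
          (Set.Ioi 0) := by
        intro ρ hρ
        have hρ0 : (0:ℝ) < ρ := hρ
        have hr1 : ρ ^ (-κ - 1) = ρ ^ (-κ) / ρ := by rw [Real.rpow_sub hρ0, Real.rpow_one]
        simp only [hr1]
        field_simp
        ring
      rw [setIntegral_congr_fun measurableSet_Ioi hEqOn,
        integral_add (int_mul hφL2 hgL2) hIntF', hF'eval, add_zero]
    -- the pairing defect: ∫ w v - ∫ u g = -1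
    have hdefect : (∫ ρ in Set.Ioi (0:ℝ),
          (ρ ^ κ * (deriv χ ρ + ε * s * ρ * χ ρ)) * (ρ ^ (-κ) * χ ρ)) -
        (∫ ρ in Set.Ioi (0:ℝ),
          (ρ ^ κ * χ ρ) * (ρ ^ (-κ) * (-(deriv χ ρ) + ε * s * ρ * χ ρ))) = -1 := by
      obtain ⟨hIntF', hEval⟩ := key_ftc (fun x => χ x ^ 2) (fun x => 2 * χ x * deriv χ x)
          (1/2) 3 (by norm_num) (by norm_num)
          (by
            intro x _
            have := ((hχdiff x).hasDerivAt).pow 2; simp at this; exact this)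
          (((continuous_const.mul hχc).mul hχdc).continuousOn)
          (by
            intro x hx hxn
            have hxo : x ≤ 1/2 ∨ 3 < x := by
              by_contra hcon
              push_neg at hcon
              exact hxn ⟨hcon.1, hcon.2⟩
            rcases hxo with h | h
            · have : |x| < 1 := abs_lt.2 ⟨by linarith, by linarith⟩
              simp [hχd1 x this]
            · simp [hχd2 x (by linarith)])
      have hval : ∫ x in Set.Ioi (0:ℝ), 2 * χ x * deriv χ x = -1 := by
        rw [hEval]
        have h3 : χ 3 = 0 := hχ0 3 (by rw [abs_of_pos (by norm_num)]; norm_num)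
        have hhalf : χ (1/2 : ℝ) = 1 := hχ1 _ (by rw [abs_of_pos (by norm_num)]; norm_num)
        rw [h3, hhalf]
        norm_num
      have hEqOn : Set.EqOn
          (fun ρ => (ρ ^ κ * (deriv χ ρ + ε * s * ρ * χ ρ)) * (ρ ^ (-κ) * χ ρ) -
            (ρ ^ κ * χ ρ) * (ρ ^ (-κ) * (-(deriv χ ρ) + ε * s * ρ * χ ρ)))
          (fun ρ => 2 * χ ρ * deriv χ ρ) (Set.Ioi 0) := by
        intro ρ hρ
        have hρ0 : (0:ℝ) < ρ := hρ
        have key : ρ ^ κ * ρ ^ (-κ) = 1 := by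
          rw [← Real.rpow_add hρ0]; simp
        simp only []
        linear_combination (2 * χ ρ * deriv χ ρ) * key
      rw [← integral_sub (int_mul hwL2 hvL2) (int_mul huL2 hgL2),
        setIntegral_congr_fun measurableSet_Ioi hEqOn, hval]
    -- pass to the limit
    have K1 : Tendsto (fun n => ∫ ρ in Set.Ioi (0:ℝ),
        (un n ρ - ρ ^ κ * χ ρ) * (ρ ^ (-κ) * (-(deriv χ ρ) + ε * s * ρ * χ ρ)))
        atTop (nhds 0) :=
      tendsto_integral_mul_zero (fun n => (hunL2 n).sub huL2) hgL2 h1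
    have K2 : Tendsto (fun n => ∫ ρ in Set.Ioi (0:ℝ),
        ((deriv (un n) ρ - κ * ρ⁻¹ * un n ρ + ε * s * ρ * un n ρ) -
          ρ ^ κ * (deriv χ ρ + ε * s * ρ * χ ρ)) * (ρ ^ (-κ) * χ ρ))
        atTop (nhds 0) :=
      tendsto_integral_mul_zero (fun n => (hdL2 n).sub hwL2) hvL2 h2
    have hconst : ∀ n, (∫ ρ in Set.Ioi (0:ℝ),
          ((deriv (un n) ρ - κ * ρ⁻¹ * un n ρ + ε * s * ρ * un n ρ) -
            ρ ^ κ * (deriv χ ρ + ε * s * ρ * χ ρ)) * (ρ ^ (-κ) * χ ρ)) -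
        (∫ ρ in Set.Ioi (0:ℝ),
          (un n ρ - ρ ^ κ * χ ρ) * (ρ ^ (-κ) * (-(deriv χ ρ) + ε * s * ρ * χ ρ))) = 1 := by
      intro n
      have e1 : ∫ ρ in Set.Ioi (0:ℝ),
          ((deriv (un n) ρ - κ * ρ⁻¹ * un n ρ + ε * s * ρ * un n ρ) -
            ρ ^ κ * (deriv χ ρ + ε * s * ρ * χ ρ)) * (ρ ^ (-κ) * χ ρ) =
          (∫ ρ in Set.Ioi (0:ℝ),
            (deriv (un n) ρ - κ * ρ⁻¹ * un n ρ + ε * s * ρ * un n ρ) * (ρ ^ (-κ) * χ ρ)) -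
          ∫ ρ in Set.Ioi (0:ℝ),
            (ρ ^ κ * (deriv χ ρ + ε * s * ρ * χ ρ)) * (ρ ^ (-κ) * χ ρ) := by
        rw [← integral_sub (int_mul (hdL2 n) hvL2) (int_mul hwL2 hvL2)]
        congr 1
        funext ρ
        ring
      have e2 : ∫ ρ in Set.Ioi (0:ℝ),
          (un n ρ - ρ ^ κ * χ ρ) * (ρ ^ (-κ) * (-(deriv χ ρ) + ε * s * ρ * χ ρ)) =
          (∫ ρ in Set.Ioi (0:ℝ), un n ρ * (ρ ^ (-κ) * (-(deriv χ ρ) + ε * s * ρ * χ ρ))) -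
          ∫ ρ in Set.Ioi (0:ℝ),
            (ρ ^ κ * χ ρ) * (ρ ^ (-κ) * (-(deriv χ ρ) + ε * s * ρ * χ ρ)) := by
        rw [← integral_sub (int_mul (hunL2 n) hgL2) (int_mul huL2 hgL2)]
        congr 1
        funext ρ
        ring
      rw [e1, e2, hIBP (un n) (hun n)]
      linarith [hdefect]
    have hT := K2.sub K1
    rw [show (fun n => (∫ ρ in Set.Ioi (0:ℝ),
          ((deriv (un n) ρ - κ * ρ⁻¹ * un n ρ + ε * s * ρ * un n ρ) -
            ρ ^ κ * (deriv χ ρ + ε * s * ρ * χ ρ)) * (ρ ^ (-κ) * χ ρ)) -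
        (∫ ρ in Set.Ioi (0:ℝ),
          (un n ρ - ρ ^ κ * χ ρ) * (ρ ^ (-κ) * (-(deriv χ ρ) + ε * s * ρ * χ ρ)))) =
        fun _ : ℕ => (1:ℝ) from funext hconst] at hT
    norm_num at hT
end
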